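/- arXiv:1807.11412 — 10 statements merged into one kernel-verified Lean document; each statement's English description precedes it below -/
import Mathlib

section
/- Let p be a prime, n ≥ 2 and s ≥ 0 be integers, and let a be an almost p-ary sequence of period n+s with exactly s zero-symbols. If the set R_a ⊆ ZMod (n+s) × ZMod p is an (n+s, p, n, λ1, λ2, μ)-DPDS, then (n+s-1)·(λ1 + μ·(p-1)) = n² - n. -/
open Finset

/-- The number of ordered pairs `(r1, r2) ∈ R × R` with `r1 ≠ r2` and `r1 - r2 = d`. -/
def diffCount {N m : ℕ} (R : Finset (ZMod N × ZMod m)) (d : ZMod N × ZMod m) : ℕ :=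
  ((R ×ˢ R).filter (fun x => x.1 ≠ x.2 ∧ x.1 - x.2 = d)).card

/-- `R` is an `(N, m, k, λ1, λ2, μ)` direct product difference set in
`ZMod N × ZMod m` relative to `ZMod N × {0}` and `{0} × ZMod m`. -/
def IsDPDS (N m k : ℕ) (l1 l2 mu : ℤ) (R : Finset (ZMod N × ZMod m)) : Prop :=
  R.card = k ∧
  (∀ h : ZMod N, h ≠ 0 → (diffCount R (h, 0) : ℤ) = l1) ∧
  (∀ g : ZMod m, g ≠ 0 → (diffCount R (0, g) : ℤ) = l2) ∧
  (∀ (h : ZMod N) (g : ZMod m), h ≠ 0 → g ≠ 0 → (diffCount R (h, g) : ℤ) = mu)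

theorem stmt0 (p n s : ℕ) (hp : p.Prime) (hn : 2 ≤ n)
    (ζ : ℂ) (hζ : IsPrimitiveRoot ζ p)
    (a : ℤ → ℂ)
    (hper : ∀ i : ℤ, a (i + (n + s : ℕ)) = a i)
    (hzero : {i : ℕ | i < n + s ∧ a (i : ℤ) = 0}.ncard = s)
    (hval : ∀ i : ℕ, i < n + s → a (i : ℤ) ≠ 0 → ∃ b : ℕ, a (i : ℤ) = ζ ^ b)
    (R : Finset (ZMod (n + s) × ZMod p))
    (hR : ∀ x : ZMod (n + s) × ZMod p, x ∈ R ↔ a (x.1.val : ℤ) = ζ ^ x.2.val)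
    (l1 l2 mu : ℤ)
    (hDPDS : IsDPDS (n + s) p n l1 l2 mu R) :
    ((n : ℤ) + s - 1) * (l1 + mu * ((p : ℤ) - 1)) = (n : ℤ) ^ 2 - n := by
  haveI : NeZero (n + s) := ⟨by omega⟩
  haveI : Fact p.Prime := ⟨hp⟩
  obtain ⟨hcard, h1, h2, h3⟩ := hDPDS
  -- R is the graph of a function: equal first coordinates force equality
  have hfun : ∀ x ∈ R, ∀ y ∈ R, (x : ZMod (n + s) × ZMod p).1 = y.1 → x = y := by
    intro x hx y hy hxy
    rw [hR] at hx hy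
    have hpow : ζ ^ x.2.val = ζ ^ y.2.val := by
      rw [← hx, ← hy, hxy]
    have := hζ.pow_inj x.2.val_lt y.2.val_lt hpow
    exact Prod.ext hxy (ZMod.val_injective p this)
  -- differences with zero first coordinate never occur
  have hzero1 : ∀ g : ZMod p, diffCount R ((0 : ZMod (n + s)), g) = 0 := by
    intro g
    rw [diffCount, Finset.card_eq_zero, Finset.filter_eq_empty_iff]
    rintro x hx ⟨hne, hdiff⟩
    rw [Finset.mem_product] at hx
    apply hne
    apply hfun _ hx.1 _ hx.2
    have : x.1.1 - x.2.1 = 0 := congrArg Prod.fst hdiff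
    exact sub_eq_zero.mp this
  -- total count of distinct ordered pairs
  have htot : ((R ×ˢ R).filter (fun x => x.1 ≠ x.2)).card = n ^ 2 - n := by
    have hdiag : ((R ×ˢ R).filter (fun x => x.1 = x.2)) = R.image (fun r => (r, r)) := by
      ext x
      simp only [Finset.mem_filter, Finset.mem_product, Finset.mem_image]
      constructor
      · rintro ⟨⟨hx1, hx2⟩, he⟩
        exact ⟨x.2, hx2, Prod.ext he.symm rfl⟩
      · rintro ⟨r, hr, rfl⟩
        exact ⟨⟨hr, hr⟩, rfl⟩
    have hsplit := Finset.card_filter_add_card_filter_not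
      (s := R ×ˢ R) (p := fun x => x.1 = x.2)
    have hdiagcard : ((R ×ˢ R).filter (fun x => x.1 = x.2)).card = n := by
      rw [hdiag, Finset.card_image_of_injective _ (fun a b h => (Prod.mk.injEq _ _ _ _ ▸ h).1),
        hcard]
    have hprod : (R ×ˢ R).card = n ^ 2 := by
      rw [Finset.card_product, hcard]; ring
    have : ((R ×ˢ R).filter (fun x => ¬ x.1 = x.2)).card = n ^ 2 - n := by omega
    simpa using this
  -- fiberwise decomposition of the total count by difference
  have hfiber : ∑ d : ZMod (n + s) × ZMod p, (diffCount R d : ℤ) = (n : ℤ) ^ 2 - n := by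
    have := Finset.card_eq_sum_card_fiberwise
      (s := (R ×ˢ R).filter (fun x => x.1 ≠ x.2)) (t := Finset.univ)
      (f := fun x => x.1 - x.2) (fun x _ => Finset.mem_univ _)
    have heq : ∀ d : ZMod (n + s) × ZMod p,
        (((R ×ˢ R).filter (fun x => x.1 ≠ x.2)).filter (fun x => x.1 - x.2 = d)).card
          = diffCount R d := by
      intro d
      rw [diffCount, Finset.filter_filter]
    have hnat : ∑ d : ZMod (n + s) × ZMod p, diffCount R d = n ^ 2 - n := by
      rw [← htot, this]
      exact Finset.sum_congr rfl fun d _ => (heq d).symm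
    have : (↑(∑ d : ZMod (n + s) × ZMod p, diffCount R d) : ℤ) = ↑(n ^ 2 - n) := by rw [hnat]
    push_cast [Nat.cast_sub (by nlinarith : n ≤ n ^ 2)] at this
    simpa using this
  -- evaluate the sum using the DPDS values
  rw [Fintype.sum_prod_type] at hfiber
  rw [← Finset.add_sum_erase Finset.univ _ (Finset.mem_univ (0 : ZMod (n + s)))] at hfiber
  have hzsum : ∑ g : ZMod p, (diffCount R ((0 : ZMod (n + s)), g) : ℤ) = 0 := by
    simp [hzero1]
  rw [hzsum, zero_add] at hfiber
  have hrow : ∀ h ∈ Finset.univ.erase (0 : ZMod (n + s)),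
      ∑ g : ZMod p, (diffCount R (h, g) : ℤ) = l1 + mu * ((p : ℤ) - 1) := by
    intro h hh
    have hh0 : h ≠ 0 := Finset.ne_of_mem_erase hh
    rw [← Finset.add_sum_erase Finset.univ _ (Finset.mem_univ (0 : ZMod p))]
    rw [h1 h hh0]
    rw [Finset.sum_congr rfl (fun g hg => h3 h g hh0 (Finset.ne_of_mem_erase hg))]
    rw [Finset.sum_const, Finset.card_erase_of_mem (Finset.mem_univ _), Finset.card_univ,
      ZMod.card]
    have hp1 : 1 ≤ p := hp.one_lt.le
    rw [nsmul_eq_mul, Nat.cast_sub hp1]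
    push_cast
    ring
  rw [Finset.sum_congr rfl hrow, Finset.sum_const,
    Finset.card_erase_of_mem (Finset.mem_univ _), Finset.card_univ, ZMod.card] at hfiber
  have hN1 : 1 ≤ n + s := by omega
  rw [nsmul_eq_mul] at hfiber
  push_cast [Nat.cast_sub hN1] at hfiber
  linarith [hfiber]
end

section
/- Let p be a prime, n ≥ 2 and s ≥ 1 be integers, and let a be an almost p-ary sequence of period n+s whose s zero-symbols are consecutive, say a_0 = a_1 = ⋯ = a_{s-1} = 0 and a_i is a power of ζ_p for s ≤ i ≤ n+s-1. If the set R_a ⊆ ZMod (n+s) × ZMod p is an (n+s, p, n, λ1, λ2, μ)-DPDS, then n - i = λ1 + μ·(p-1) for every i = 1, 2, …, s, and consequently s = 1. -/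
open Finset

theorem stmt1 (p n s : ℕ) (hp : p.Prime) (hn : 2 ≤ n) (hs : 1 ≤ s)
    (ζ : ℂ) (hζ : IsPrimitiveRoot ζ p)
    (a : ℤ → ℂ)
    (hper : ∀ i : ℤ, a (i + (n + s : ℕ)) = a i)
    (hzero : ∀ i : ℕ, i < s → a (i : ℤ) = 0)
    (hval : ∀ i : ℕ, s ≤ i → i < n + s → ∃ b : ℕ, a (i : ℤ) = ζ ^ b)
    (R : Finset (ZMod (n + s) × ZMod p))
    (hR : ∀ x : ZMod (n + s) × ZMod p, x ∈ R ↔ a (x.1.val : ℤ) = ζ ^ x.2.val)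
    (l1 l2 mu : ℤ)
    (hDPDS : IsDPDS (n + s) p n l1 l2 mu R) :
    (∀ i : ℕ, 1 ≤ i → i ≤ s → (n : ℤ) - i = l1 + mu * ((p : ℤ) - 1)) ∧ s = 1 := by

  haveI : NeZero (n + s) := ⟨by omega⟩
  haveI : Fact p.Prime := ⟨hp⟩
  have hζ0 : ζ ≠ 0 := by
    intro h
    have h1 := hζ.pow_eq_one
    rw [h, zero_pow hp.ne_zero] at h1
    exact zero_ne_one h1
  have hcast : ∀ b : ZMod (n + s), ((b.val : ℕ) : ZMod (n + s)) = b := by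
    intro b; simp [ZMod.natCast_val, ZMod.cast_id]
  have hc0 : ∀ j : ℕ, s ≤ j → j < n + s → ∃ g : ZMod p, a (j : ℤ) = ζ ^ g.val := by
    intro j h1 h2
    obtain ⟨b, hb⟩ := hval j h1 h2
    refine ⟨(b : ZMod p), ?_⟩
    rw [hb, ZMod.val_natCast]
    conv_lhs => rw [← Nat.mod_add_div b p]
    rw [pow_add, pow_mul, hζ.pow_eq_one, one_pow, mul_one]
  choose c0 hc0spec using hc0
  set c : ℕ → ZMod p := fun j => if h : s ≤ j ∧ j < n + s then c0 j h.1 h.2 else 0 with hcdef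
  have hcspec : ∀ j, s ≤ j → j < n + s → a (j : ℤ) = ζ ^ (c j).val := by
    intro j h1 h2
    simp only [hcdef, dif_pos (And.intro h1 h2)]
    exact hc0spec j h1 h2
  have hRmem : ∀ x : ZMod (n + s) × ZMod p, x ∈ R ↔ s ≤ x.1.val ∧ x.2 = c x.1.val := by
    intro x
    rw [hR]
    constructor
    · intro h
      have h1 : s ≤ x.1.val := by
        by_contra hlt
        rw [hzero x.1.val (by omega)] at h
        exact pow_ne_zero _ hζ0 h.symm
      refine ⟨h1, ?_⟩
      have h2 := hcspec x.1.val h1 (ZMod.val_lt x.1)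
      have h3 : ζ ^ x.2.val = ζ ^ (c x.1.val).val := h.symm.trans h2
      exact ZMod.val_injective p (hζ.pow_inj (ZMod.val_lt x.2) (ZMod.val_lt _) h3)
    · rintro ⟨h1, h2⟩
      rw [h2]
      exact hcspec _ h1 (ZMod.val_lt x.1)
  obtain ⟨hcard, hl1, hl2, hmu⟩ := hDPDS
  have key : ∀ i : ℕ, 1 ≤ i → i ≤ s → l1 + mu * ((p : ℤ) - 1) = ((n - i : ℕ) : ℤ) := by
    intro i hi1 his
    set d : ZMod (n + s) := ((i : ℕ) : ZMod (n + s)) with hddef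
    have hdval : d.val = i := ZMod.val_natCast_of_lt (by omega)
    have hd0 : d ≠ 0 := by
      intro h
      rw [h, ZMod.val_zero] at hdval
      omega
    -- characterization of pairs with first-coordinate difference d
    have hTchar : ∀ x ∈ (R ×ˢ R).filter (fun x : (ZMod (n+s) × ZMod p) × (ZMod (n+s) × ZMod p) => x.1.1 - x.2.1 = d),
        s ≤ x.2.1.val ∧ x.2.1.val + i < n + s ∧ x.1.1.val = x.2.1.val + i ∧
          x.1.2 = c x.1.1.val ∧ x.2.2 = c x.2.1.val := by
      intro x hx
      rw [Finset.mem_filter, Finset.mem_product] at hx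
      obtain ⟨⟨hx1, hx2⟩, hxd⟩ := hx
      obtain ⟨hs1, hc1⟩ := (hRmem x.1).1 hx1
      obtain ⟨hs2, hc2⟩ := (hRmem x.2).1 hx2
      have heq : x.1.1 = d + x.2.1 := by
        rw [← hxd]; ring
      have hval1 : x.1.1.val = (i + x.2.1.val) % (n + s) := by
        rw [heq, ZMod.val_add, hdval]
      have hvlt : x.2.1.val < n + s := ZMod.val_lt x.2.1
      have hlt : x.2.1.val + i < n + s := by
        by_contra hge
        rw [Nat.mod_eq_sub_mod (by omega), Nat.mod_eq_of_lt (by omega)] at hval1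
        omega
      have hval1' : x.1.1.val = x.2.1.val + i := by
        rw [hval1, Nat.mod_eq_of_lt (by omega)]; omega
      exact ⟨hs2, hlt, hval1', hc1, hc2⟩
    have hT : ((R ×ˢ R).filter (fun x : (ZMod (n+s) × ZMod p) × (ZMod (n+s) × ZMod p) => x.1.1 - x.2.1 = d)).card = n - i := by
      rw [show n - i = (Finset.Ico s (n + s - i)).card by rw [Nat.card_Ico]; omega]
      refine Finset.card_bij' (fun x _ => x.2.1.val)
        (fun k _ => (((((k + i : ℕ) : ZMod (n+s)), c (k + i)) : ZMod (n+s) × ZMod p),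
          ((((k : ℕ) : ZMod (n+s)), c k) : ZMod (n+s) × ZMod p))) ?_ ?_ ?_ ?_
      · intro x hx
        obtain ⟨hs2, hlt, _, _, _⟩ := hTchar x hx
        simp only [Finset.mem_Ico]
        omega
      · intro k hk
        rw [Finset.mem_Ico] at hk
        have hki : k + i < n + s := by omega
        have hkv : (((k + i : ℕ) : ZMod (n+s))).val = k + i := ZMod.val_natCast_of_lt hki
        have hkv2 : (((k : ℕ) : ZMod (n+s))).val = k := ZMod.val_natCast_of_lt (by omega)
        rw [Finset.mem_filter, Finset.mem_product]
        refine ⟨⟨?_, ?_⟩, ?_⟩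
        · rw [hRmem]; exact ⟨by rw [hkv]; omega, by rw [hkv]⟩
        · rw [hRmem]; exact ⟨by rw [hkv2]; omega, by rw [hkv2]⟩
        · show ((k + i : ℕ) : ZMod (n+s)) - ((k : ℕ) : ZMod (n+s)) = d
          rw [hddef]; push_cast; ring
      · intro x hx
        obtain ⟨hs2, hlt, hval1', hc1, hc2⟩ := hTchar x hx
        have e2 : ((x.2.1.val : ℕ) : ZMod (n+s)) = x.2.1 := hcast x.2.1
        have e1 : ((x.2.1.val + i : ℕ) : ZMod (n+s)) = x.1.1 := by
          rw [← hval1']; exact hcast x.1.1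
        ext <;> simp only [hcast, ← hval1', hc1, hc2]
      · intro k hk
        rw [Finset.mem_Ico] at hk
        exact ZMod.val_natCast_of_lt (by omega)
    -- split the filter by second coordinate of the difference
    have hsplit : (R ×ˢ R).filter (fun x : (ZMod (n+s) × ZMod p) × (ZMod (n+s) × ZMod p) => x.1.1 - x.2.1 = d)
        = (Finset.univ : Finset (ZMod p)).biUnion
            (fun g => (R ×ˢ R).filter (fun x => x.1 ≠ x.2 ∧ x.1 - x.2 = (d, g))) := by
      ext x
      simp only [Finset.mem_filter, Finset.mem_biUnion, Finset.mem_univ, true_and]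
      constructor
      · rintro ⟨hx, hxd⟩
        refine ⟨x.1.2 - x.2.2, hx, ?_, ?_⟩
        · intro h
          rw [h, sub_self] at hxd
          exact hd0 hxd.symm
        · exact Prod.ext hxd rfl
      · rintro ⟨g, hx, _, hxd⟩
        exact ⟨hx, congrArg Prod.fst hxd⟩
    have hdisj : ∀ g ∈ (Finset.univ : Finset (ZMod p)), ∀ g' ∈ (Finset.univ : Finset (ZMod p)), g ≠ g' →
        Disjoint ((R ×ˢ R).filter (fun x : (ZMod (n+s) × ZMod p) × (ZMod (n+s) × ZMod p) => x.1 ≠ x.2 ∧ x.1 - x.2 = (d, g)))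
          ((R ×ˢ R).filter (fun x => x.1 ≠ x.2 ∧ x.1 - x.2 = (d, g'))) := by
      intro g _ g' _ hgg'
      rw [Finset.disjoint_left]
      rintro x hx hx'
      rw [Finset.mem_filter] at hx hx'
      apply hgg'
      have := hx.2.2.symm.trans hx'.2.2
      exact (congrArg Prod.snd this)
    have hsum : ∑ g : ZMod p, diffCount R (d, g) = n - i := by
      rw [← hT, hsplit, Finset.card_biUnion hdisj]
      rfl
    have hAsum : (∑ g : ZMod p, (diffCount R (d, g) : ℤ)) = l1 + mu * ((p : ℤ) - 1) := by
      rw [← Finset.add_sum_erase Finset.univ _ (Finset.mem_univ (0 : ZMod p))]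
      rw [hl1 d hd0]
      have hrest : ∑ g ∈ Finset.univ.erase (0 : ZMod p), (diffCount R (d, g) : ℤ)
          = ∑ _g ∈ Finset.univ.erase (0 : ZMod p), mu :=
        Finset.sum_congr rfl (fun g hg => hmu d g hd0 (Finset.ne_of_mem_erase hg))
      rw [hrest, Finset.sum_const, Finset.card_erase_of_mem (Finset.mem_univ _),
        Finset.card_univ, ZMod.card, nsmul_eq_mul, Nat.cast_sub hp.one_le]
      push_cast
      ring
    calc l1 + mu * ((p : ℤ) - 1) = ∑ g : ZMod p, (diffCount R (d, g) : ℤ) := hAsum.symm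
      _ = ((∑ g : ZMod p, diffCount R (d, g) : ℕ) : ℤ) := by push_cast; rfl
      _ = ((n - i : ℕ) : ℤ) := by rw [hsum]
  have hs1 : s = 1 := by
    have e1 := key 1 le_rfl hs
    have e2 := key s hs le_rfl
    have e3 : ((n - 1 : ℕ) : ℤ) = ((n - s : ℕ) : ℤ) := e1.symm.trans e2
    have e4 : (n - 1 : ℕ) = (n - s : ℕ) := Nat.cast_inj.mp e3
    omega
  refine ⟨?_, hs1⟩
  intro i hi1 his
  have hi : i = 1 := by omega
  subst hi
  have := key 1 le_rfl hs
  rw [this]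
  have : ((n - 1 : ℕ) : ℤ) = (n : ℤ) - 1 := by
    rw [Nat.cast_sub (by omega)]; norm_num
  rw [this]
  norm_num
end

section
/- Let p be a prime, n ≥ 2 and s ≥ 0 be integers, and let a be an almost p-ary sequence of period n+s whose s zero-symbols are consecutive, say a_0 = a_1 = ⋯ = a_{s-1} = 0 and a_i is a power of ζ_p for s ≤ i ≤ n+s-1. Let ℓ be the number of distinct values in the set {C_a(1), C_a(2), …, C_a(n+s-1)} of out-of-phase autocorrelation coefficients. Then min{s, p, n} ≤ ℓ ≤ n - 1 + min{n, s}. -/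
open Finset

/-- The autocorrelation function of a sequence `a` of period `N`:
`C_a(t) = ∑_{i=0}^{N-1} a_i · conj(a_{i+t})`. -/
noncomputable def autocorr (N : ℕ) (a : ℤ → ℂ) (t : ℤ) : ℂ :=
  ∑ i ∈ Finset.range N, a (i : ℤ) * (starRingEnd ℂ) (a ((i : ℤ) + t))

open Polynomial in
lemma key_sum_roots {p : ℕ} (hp : p.Prime) {ζ : ℂ} (hζ : IsPrimitiveRoot ζ p)
    {A B : Finset ℕ} {f g : ℕ → ℕ}
    (h : ∑ i ∈ A, ζ ^ f i = ∑ i ∈ B, ζ ^ g i) :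
    (p : ℤ) ∣ (A.card : ℤ) - B.card := by
  haveI : Fact p.Prime := ⟨hp⟩
  set P : ℤ[X] := (∑ i ∈ A, X ^ (f i % p)) - ∑ i ∈ B, X ^ (g i % p) with hP
  set Pq : ℚ[X] := P.map (Int.castRingHom ℚ) with hPq
  have hζp : ζ ^ p = 1 := hζ.pow_eq_one
  have hmod : ∀ k : ℕ, ζ ^ (k % p) = ζ ^ k := by
    intro k
    conv_rhs => rw [← Nat.div_add_mod k p]
    rw [pow_add, pow_mul, hζp, one_pow, one_mul]
  have haev : Polynomial.aeval ζ Pq = 0 := by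
    rw [hPq]
    rw [show (Int.castRingHom ℚ) = algebraMap ℤ ℚ from rfl, aeval_map_algebraMap]
    simp only [hP, map_sub, map_sum, map_pow, aeval_X]
    simp only [hmod]
    rw [h, sub_self]
  have hmin : cyclotomic p ℚ = minpoly ℚ ζ := cyclotomic_eq_minpoly_rat hζ hp.pos
  obtain ⟨q, hq⟩ : cyclotomic p ℚ ∣ Pq := hmin ▸ minpoly.dvd ℚ ζ haev
  have hΦdeg : (cyclotomic p ℚ).degree = ((p - 1 : ℕ) : WithBot ℕ) := by
    rw [degree_cyclotomic, Nat.totient_prime hp]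
  have hdegsum : ∀ (C : Finset ℕ) (h : ℕ → ℕ),
      (∑ i ∈ C, (X : ℤ[X]) ^ (h i % p)).degree ≤ ((p - 1 : ℕ) : WithBot ℕ) := by
    intro C h
    refine (degree_sum_le _ _).trans (Finset.sup_le fun i _ => ?_)
    rw [degree_X_pow]
    exact_mod_cast Nat.le_sub_one_of_lt (Nat.mod_lt _ hp.pos)
  have hdeg : Pq.degree ≤ ((p - 1 : ℕ) : WithBot ℕ) := by
    refine degree_map_le.trans ?_
    rw [hP]
    exact (degree_sub_le _ _).trans (max_le (hdegsum A f) (hdegsum B g))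
  have hq0 : q.degree ≤ 0 := by
    rcases eq_or_ne q 0 with rfl | hqne
    · simp
    · have hΦne : cyclotomic p ℚ ≠ 0 := cyclotomic_ne_zero p ℚ
      have hdd := hdeg
      rw [hq, degree_mul, hΦdeg, degree_eq_natDegree hqne] at hdd
      have : ((p - 1 + q.natDegree : ℕ) : WithBot ℕ) ≤ ((p - 1 : ℕ) : WithBot ℕ) := by
        exact_mod_cast hdd
      have hnd : q.natDegree = 0 := by
        have := (Nat.cast_le (α := WithBot ℕ)).mp this
        omega
      rw [degree_eq_natDegree hqne, hnd]
      exact le_refl _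
  have hqC : q = C (q.coeff 0) := eq_C_of_degree_le_zero hq0
  have hΦmonic : (cyclotomic p ℚ).Monic := cyclotomic.monic p ℚ
  have hΦlead : (cyclotomic p ℚ).coeff (p - 1) = 1 := by
    have hnd : (cyclotomic p ℚ).natDegree = p - 1 := by
      rw [natDegree_cyclotomic, Nat.totient_prime hp]
    rw [← hnd]
    exact hΦmonic
  have hcoeff : Pq.coeff (p - 1) = q.coeff 0 := by
    rw [hq, hqC, coeff_mul_C, hΦlead, one_mul, coeff_C_zero]
  have heval : Pq.eval 1 = (p : ℚ) * q.coeff 0 := by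
    rw [hq, hqC, eval_mul, eval_C, eval_one_cyclotomic_prime, coeff_C_zero]
  have hcoeffZ : Pq.coeff (p - 1) = ((P.coeff (p - 1) : ℤ) : ℚ) := by
    rw [hPq, coeff_map]; rfl
  have hevalZ : Pq.eval 1 = ((P.eval 1 : ℤ) : ℚ) := by
    rw [hPq, eval_one_map]; rfl
  have hZ : ((P.eval 1 : ℤ) : ℚ) = (p : ℚ) * ((P.coeff (p - 1) : ℤ) : ℚ) := by
    rw [← hevalZ, heval, ← hcoeff, hcoeffZ]
  have hZ' : P.eval 1 = (p : ℤ) * P.coeff (p - 1) := by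
    exact_mod_cast hZ
  have hev1 : P.eval 1 = (A.card : ℤ) - B.card := by
    simp [hP, eval_finset_sum]
  rw [hev1] at hZ'
  exact ⟨P.coeff (p - 1), hZ'⟩

theorem stmt4 (p n s : ℕ) (hp : p.Prime) (hn : 2 ≤ n)
    (ζ : ℂ) (hζ : IsPrimitiveRoot ζ p)
    (a : ℤ → ℂ)
    (hper : ∀ i : ℤ, a (i + (n + s : ℕ)) = a i)
    (hzero : ∀ i : ℕ, i < s → a (i : ℤ) = 0)
    (hval : ∀ i : ℕ, s ≤ i → i < n + s → ∃ b : ℕ, a (i : ℤ) = ζ ^ b)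
    (ℓ : ℕ)
    (hℓ : ℓ = ((Finset.Icc 1 (n + s - 1)).image
      (fun t : ℕ => autocorr (n + s) a (t : ℤ))).card) :
    min s (min p n) ≤ ℓ ∧ ℓ ≤ n - 1 + min n s := by
  have hp1 : 1 ≤ p := hp.pos
  -- conjugation of powers of ζ
  have hζp : ζ ^ p = 1 := hζ.pow_eq_one
  have hζne : ζ ≠ 0 := by
    intro h
    rw [h, zero_pow hp.pos.ne'] at hζp
    exact zero_ne_one hζp
  have hnorm : ‖ζ‖ = 1 := Complex.norm_eq_one_of_pow_eq_one hζp hp.pos.ne'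
  have hconj : (starRingEnd ℂ) ζ = ζ ^ (p - 1) := by
    have h1 : ζ * (starRingEnd ℂ) ζ = 1 := by
      rw [Complex.mul_conj]
      norm_cast
      rw [Complex.normSq_eq_norm_sq]
      simp only [hnorm, one_pow]
    have h2 : ζ * ζ ^ (p - 1) = 1 := by
      rw [← pow_succ', Nat.sub_add_cancel hp1, hζp]
    exact mul_left_cancel₀ hζne (h1.trans h2.symm)
  have hconjpow : ∀ k : ℕ, (starRingEnd ℂ) (ζ ^ k) = ζ ^ ((p - 1) * k) := by
    intro k; rw [map_pow, hconj, ← pow_mul]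
  -- exponents
  obtain ⟨e, he⟩ : ∃ e : ℕ → ℕ, ∀ i, s ≤ i → i < n + s → a (i : ℤ) = ζ ^ e i := by
    refine ⟨fun i => if h : s ≤ i ∧ i < n + s then (hval i h.1 h.2).choose else 0,
      fun i h1 h2 => ?_⟩
    simp only [dif_pos (⟨h1, h2⟩ : s ≤ i ∧ i < n + s)]
    exact (hval i h1 h2).choose_spec
  -- periodicity for naturals
  have hper' : ∀ i : ℕ, n + s ≤ i → a (i : ℤ) = a ((i - (n + s) : ℕ) : ℤ) := by
    intro i hi
    have h := hper ((i - (n + s) : ℕ) : ℤ)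
    rw [← h]
    congr 1
    have : ((i - (n + s) : ℕ) : ℤ) = (i : ℤ) - (n + s : ℕ) := by
      rw [Nat.cast_sub hi]
    rw [this]; ring
  -- autocorrelation formula for 1 ≤ t ≤ min s n
  have hformula : ∀ t : ℕ, 1 ≤ t → t ≤ s → t ≤ n →
      autocorr (n + s) a (t : ℤ) =
        ∑ i ∈ Finset.Ico s (n + s - t), ζ ^ (e i + (p - 1) * e (i + t)) := by
    intro t ht1 hts htn
    rw [autocorr]
    have hsub : Finset.Ico s (n + s - t) ⊆ Finset.range (n + s) := by
      intro i hi
      rw [Finset.mem_Ico] at hi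
      rw [Finset.mem_range]
      omega
    rw [← Finset.sum_subset hsub]
    · refine Finset.sum_congr rfl fun i hi => ?_
      rw [Finset.mem_Ico] at hi
      have hcast : ((i : ℤ) + (t : ℤ)) = ((i + t : ℕ) : ℤ) := by push_cast; ring
      rw [hcast, he i hi.1 (by omega), he (i + t) (by omega) (by omega),
        hconjpow, ← pow_add]
    · intro i hi hni
      rw [Finset.mem_range] at hi
      rw [Finset.mem_Ico] at hni
      rcases lt_or_ge i s with h | h
      · rw [hzero i h, zero_mul]
      · have hit : n + s - t ≤ i := by omega
        have hcast : ((i : ℤ) + (t : ℤ)) = ((i + t : ℕ) : ℤ) := by push_cast; ring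
        rw [hcast, hper' (i + t) (by omega), hzero (i + t - (n + s)) (by omega),
          map_zero, mul_zero]
  -- autocorrelation vanishes for n ≤ t ≤ s
  have hzero_ac : ∀ t : ℕ, n ≤ t → t ≤ s → autocorr (n + s) a (t : ℤ) = 0 := by
    intro t htn hts
    rw [autocorr]
    apply Finset.sum_eq_zero
    intro i hi
    rw [Finset.mem_range] at hi
    rcases lt_or_ge i s with h | h
    · rw [hzero i h, zero_mul]
    · have hcast : ((i : ℤ) + (t : ℤ)) = ((i + t : ℕ) : ℤ) := by push_cast; ring
      rw [hcast, hper' (i + t) (by omega), hzero (i + t - (n + s)) (by omega),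
        map_zero, mul_zero]
  constructor
  · -- lower bound
    rcases Nat.eq_zero_or_pos (min s (min p n)) with h0 | hmpos
    · omega
    · have hs1 : 1 ≤ s := le_trans hmpos (min_le_left _ _)
      set m := min s (min p n) with hm
      have hcard : m = (Finset.Icc 1 m).card := by rw [Nat.card_Icc]; omega
      rw [hℓ, hcard]
      refine Finset.card_le_card_of_injOn (fun t : ℕ => autocorr (n + s) a (t : ℤ))
        (fun t ht => ?_) (fun t ht t' ht' heq => ?_)
      · rw [Finset.mem_coe, Finset.mem_Icc] at ht
        refine Finset.mem_image_of_mem _ (Finset.mem_Icc.mpr ⟨ht.1, ?_⟩)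
        have : m ≤ n := le_trans (min_le_right _ _) (min_le_right _ _)
        omega
      · simp only [Finset.coe_Icc, Set.mem_Icc] at ht ht'
        have hms : m ≤ s := min_le_left _ _
        have hmp : m ≤ p := le_trans (min_le_right _ _) (min_le_left _ _)
        have hmn : m ≤ n := le_trans (min_le_right _ _) (min_le_right _ _)
        change autocorr (n + s) a (t : ℤ) = autocorr (n + s) a (t' : ℤ) at heq
        rw [hformula t ht.1 (by omega) (by omega),
          hformula t' ht'.1 (by omega) (by omega)] at heq
        have hdvd := key_sum_roots hp hζ heq
        rw [Nat.card_Ico, Nat.card_Ico] at hdvd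
        have hcards : ((n + s - t - s : ℕ) : ℤ) - ((n + s - t' - s : ℕ) : ℤ)
            = (t' : ℤ) - (t : ℤ) := by omega
        rw [hcards] at hdvd
        have habs : |(t' : ℤ) - (t : ℤ)| < (p : ℤ) := by
          rw [abs_lt]; omega
        have := Int.eq_zero_of_abs_lt_dvd hdvd habs
        omega
  · -- upper bound
    rcases le_or_gt s n with hsn | hns
    · rw [min_eq_right hsn]
      have h1 : ℓ ≤ n + s - 1 := by
        rw [hℓ]
        refine Finset.card_image_le.trans ?_
        rw [Nat.card_Icc]; omega
      omega
    · rw [min_eq_left hns.le]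
      set F : ℕ → ℂ := fun t : ℕ => autocorr (n + s) a (t : ℤ) with hF
      have hsub : (Finset.Icc 1 (n + s - 1)).image F ⊆
          insert 0 ((Finset.Icc 1 (n - 1)).image F ∪
            (Finset.Icc (s + 1) (n + s - 1)).image F) := by
        intro x hx
        rw [Finset.mem_image] at hx
        obtain ⟨t, ht, rfl⟩ := hx
        rw [Finset.mem_Icc] at ht
        rcases lt_or_ge t n with h1 | h1
        · exact Finset.mem_insert_of_mem (Finset.mem_union_left _
            (Finset.mem_image_of_mem _ (Finset.mem_Icc.mpr ⟨ht.1, by omega⟩)))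
        · rcases le_or_gt t s with h2 | h2
          · have : F t = 0 := hzero_ac t h1 h2
            rw [this]
            exact Finset.mem_insert_self _ _
          · exact Finset.mem_insert_of_mem (Finset.mem_union_right _
              (Finset.mem_image_of_mem _ (Finset.mem_Icc.mpr ⟨by omega, ht.2⟩)))
      have h1 := Finset.card_le_card hsub
      have h2 := Finset.card_insert_le (0 : ℂ)
        ((Finset.Icc 1 (n - 1)).image F ∪ (Finset.Icc (s + 1) (n + s - 1)).image F)
      have h3 := Finset.card_union_le ((Finset.Icc 1 (n - 1)).image F)
        ((Finset.Icc (s + 1) (n + s - 1)).image F)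
      have h4 := Finset.card_image_le (s := Finset.Icc 1 (n - 1)) (f := F)
      have h5 := Finset.card_image_le (s := Finset.Icc (s + 1) (n + s - 1)) (f := F)
      rw [Nat.card_Icc] at h4 h5
      rw [hℓ]
      omega
end

section
/- Let p be a prime, n ≥ 2 and s ≥ 2 be integers, and let γ be an integer. Then there does not exist an almost p-ary sequence a of period n+s with s consecutive zero-symbols (a_0 = a_1 = ⋯ = a_{s-1} = 0 and a_i a power of ζ_p for s ≤ i ≤ n+s-1) such that C_a(t) = γ for all 1 ≤ t ≤ n+s-1; that is, no almost p-ary nearly perfect sequence of type γ with s ≥ 2 consecutive zero-symbols exists. -/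
open Finset

theorem stmt5 (p n s : ℕ) (hp : p.Prime) (hn : 2 ≤ n) (hs : 2 ≤ s)
    (ζ : ℂ) (hζ : IsPrimitiveRoot ζ p) (γ : ℤ) :
    ¬ ∃ a : ℤ → ℂ,
      (∀ i : ℤ, a (i + (n + s : ℕ)) = a i) ∧
      (∀ i : ℕ, i < s → a (i : ℤ) = 0) ∧
      (∀ i : ℕ, s ≤ i → i < n + s → ∃ b : ℕ, a (i : ℤ) = ζ ^ b) ∧
      (∀ t : ℕ, 1 ≤ t → t ≤ n + s - 1 → autocorr (n + s) a (t : ℤ) = (γ : ℂ)) := by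
  rintro ⟨a, hper, hz, hnz, hC⟩
  classical
  -- choose exponents for the nonzero entries
  have hbex : ∀ i : ℕ, ∃ c : ℕ, (s ≤ i → i < n + s → a (i : ℤ) = ζ ^ c) := by
    intro i
    by_cases h : s ≤ i ∧ i < n + s
    · obtain ⟨c, hc⟩ := hnz i h.1 h.2
      exact ⟨c, fun _ _ => hc⟩
    · exact ⟨0, fun h1 h2 => absurd ⟨h1, h2⟩ h⟩
  choose b hb using hbex
  have hζp : ζ ^ p = 1 := hζ.pow_eq_one
  have habs : ‖ζ‖ = 1 := Complex.norm_eq_one_of_pow_eq_one hζp hp.pos.ne'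
  have hinv : ζ ^ (p - 1) = ζ⁻¹ := by
    have h1 : ζ ^ (p - 1) * ζ = 1 := by
      rw [← pow_succ, Nat.sub_add_cancel hp.one_le, hζp]
    exact eq_inv_of_mul_eq_one_left h1
  have hconj : ∀ k : ℕ, (starRingEnd ℂ) (ζ ^ k) = ζ ^ ((p - 1) * k) := by
    intro k
    rw [map_pow, ← Complex.inv_eq_conj habs, ← hinv, ← pow_mul]
  -- the key computation: for small shifts t, γ is a sum of n - t p-th roots of unity
  have key : ∀ t : ℕ, 1 ≤ t → t ≤ s → t ≤ n →
      (γ : ℂ) = ∑ j ∈ Finset.range (n - t), ζ ^ (b (s + j) + (p - 1) * b (s + j + t)) := by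
    intro t ht1 hts htn
    have hCt := hC t ht1 (by omega)
    rw [autocorr] at hCt
    rw [← hCt, Finset.range_eq_Ico]
    have h3 : n + s - t ≤ n + s := by omega
    rw [← Finset.sum_Ico_consecutive (fun i : ℕ => a (i : ℤ) * (starRingEnd ℂ) (a ((i : ℤ) + (t : ℤ))))
        (Nat.zero_le (n + s - t)) h3]
    have h2 : s ≤ n + s - t := by omega
    rw [← Finset.sum_Ico_consecutive (fun i : ℕ => a (i : ℤ) * (starRingEnd ℂ) (a ((i : ℤ) + (t : ℤ))))
        (Nat.zero_le s) h2]
    have hfirst : ∑ i ∈ Finset.Ico 0 s, a (i : ℤ) * (starRingEnd ℂ) (a ((i : ℤ) + (t : ℤ))) = 0 := by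
      apply Finset.sum_eq_zero
      intro i hi
      rw [Finset.mem_Ico] at hi
      rw [hz i hi.2, zero_mul]
    have hlast : ∑ i ∈ Finset.Ico (n + s - t) (n + s),
        a (i : ℤ) * (starRingEnd ℂ) (a ((i : ℤ) + (t : ℤ))) = 0 := by
      apply Finset.sum_eq_zero
      intro i hi
      rw [Finset.mem_Ico] at hi
      have hj : ((i : ℤ) + (t : ℤ)) = ((i + t - (n + s) : ℕ) : ℤ) + ((n + s : ℕ) : ℤ) := by
        push_cast [Nat.cast_sub (by omega : n + s ≤ i + t)]
        ring
      rw [hj, hper, hz (i + t - (n + s)) (by omega), map_zero, mul_zero]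
    have hmid : ∑ i ∈ Finset.Ico s (n + s - t),
        a (i : ℤ) * (starRingEnd ℂ) (a ((i : ℤ) + (t : ℤ)))
        = ∑ j ∈ Finset.range (n - t), ζ ^ (b (s + j) + (p - 1) * b (s + j + t)) := by
      rw [Finset.sum_Ico_eq_sum_range]
      have hnt : n + s - t - s = n - t := by omega
      rw [hnt]
      apply Finset.sum_congr rfl
      intro j hj
      rw [Finset.mem_range] at hj
      have hij : ((s + j : ℕ) : ℤ) + (t : ℤ) = ((s + j + t : ℕ) : ℤ) := by push_cast; ring
      rw [hij, hb (s + j) (by omega) (by omega), hb (s + j + t) (by omega) (by omega),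
        hconj, ← pow_add]
    rw [hfirst, hlast, hmid, zero_add, add_zero, Finset.range_eq_Ico]
  have e1 := key 1 (by omega) (by omega) (by omega)
  have e2 := key 2 (by omega) (by omega) (by omega)
  -- the polynomial whose root at ζ gives the contradiction
  set P : Polynomial ℤ :=
    (∑ j ∈ Finset.range (n - 1), Polynomial.X ^ (b (s + j) + (p - 1) * b (s + j + 1))) -
    (∑ j ∈ Finset.range (n - 2), Polynomial.X ^ (b (s + j) + (p - 1) * b (s + j + 2))) with hP
  have haev : Polynomial.aeval ζ P = 0 := by
    rw [hP, map_sub, map_sum, map_sum]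
    simp only [map_pow, Polynomial.aeval_X]
    rw [← e1, ← e2, sub_self]
  haveI : Fact p.Prime := ⟨hp⟩
  have hdvd : Polynomial.cyclotomic p ℤ ∣ P := by
    rw [Polynomial.cyclotomic_eq_minpoly hζ hp.pos]
    exact minpoly.isIntegrallyClosed_dvd (hζ.isIntegral hp.pos) haev
  have hevP : Polynomial.eval 1 P = 1 := by
    rw [hP]
    simp only [Polynomial.eval_sub, Polynomial.eval_finset_sum, Polynomial.eval_pow,
      Polynomial.eval_X, one_pow, Finset.sum_const, nsmul_eq_mul, mul_one, Finset.card_range]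
    omega
  have hdvd1 : (p : ℤ) ∣ 1 := by
    rw [← hevP, ← Polynomial.eval_one_cyclotomic_prime (R := ℤ) (p := p)]
    exact Polynomial.eval_dvd hdvd
  have hple := Int.le_of_dvd one_pos hdvd1
  have := hp.two_le
  omega
end

section
/- Let p be a prime and n > s ≥ 2 be integers, and let a be an almost p-ary sequence of period n+s with consecutive zero-symbols a_0 = a_1 = ⋯ = a_{s-1} = 0 and a_i a power of ζ_p for s ≤ i ≤ n+s-1. If 1 ≤ i < j ≤ s and C_a(i) = C_a(j), then p divides j - i. -/
open Finset Polynomial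

theorem stmt6 (p n s : ℕ) (hp : p.Prime) (hs : 2 ≤ s) (hns : s < n)
    (ζ : ℂ) (hζ : IsPrimitiveRoot ζ p)
    (a : ℤ → ℂ)
    (hper : ∀ i : ℤ, a (i + (n + s : ℕ)) = a i)
    (hzero : ∀ i : ℕ, i < s → a (i : ℤ) = 0)
    (hval : ∀ i : ℕ, s ≤ i → i < n + s → ∃ b : ℕ, a (i : ℤ) = ζ ^ b)
    (i j : ℕ) (hi : 1 ≤ i) (hij : i < j) (hj : j ≤ s)
    (heq : autocorr (n + s) a (i : ℤ) = autocorr (n + s) a (j : ℤ)) :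
    p ∣ j - i := by
  have hppos : 0 < p := hp.pos
  -- choose exponents b
  have hb : ∀ k : ℕ, ∃ b : ℕ, (s ≤ k → k < n + s → a (k : ℤ) = ζ ^ b) := by
    intro k
    by_cases h : s ≤ k ∧ k < n + s
    · obtain ⟨b, hb⟩ := hval k h.1 h.2
      exact ⟨b, fun _ _ => hb⟩
    · exact ⟨0, fun h1 h2 => absurd ⟨h1, h2⟩ h⟩
  choose b hbspec using hb
  -- conjugation of powers of ζ
  have hnormζ : ‖ζ‖ = 1 :=
    Complex.norm_eq_one_of_pow_eq_one hζ.pow_eq_one hppos.ne'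
  have hζne : ζ ≠ 0 := by
    intro h; rw [h] at hnormζ; simp at hnormζ
  have hconjζ : (starRingEnd ℂ) ζ = ζ ^ (p - 1) := by
    have h1 : ζ * (starRingEnd ℂ) ζ = 1 := by
      rw [Complex.mul_conj]
      norm_cast
      rw [Complex.normSq_eq_norm_sq, hnormζ]; norm_num
    have h2 : ζ * ζ ^ (p - 1) = 1 := by
      rw [← pow_succ', show p - 1 + 1 = p by omega, hζ.pow_eq_one]
    exact mul_left_cancel₀ hζne (h1.trans h2.symm)
  have hconj : ∀ c : ℕ, (starRingEnd ℂ) (ζ ^ c) = ζ ^ ((p - 1) * c) := by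
    intro c; rw [map_pow, hconjζ, ← pow_mul]
  -- value of autocorrelation for 1 ≤ t ≤ s
  have hauto : ∀ t : ℕ, 1 ≤ t → t ≤ s →
      autocorr (n + s) a (t : ℤ) =
        ∑ k ∈ Finset.Ico s (n + s - t), ζ ^ (b k + (p - 1) * b (k + t)) := by
    intro t ht1 hts
    have hsub : Finset.Ico s (n + s - t) ⊆ Finset.range (n + s) := by
      intro x hx
      simp only [Finset.mem_Ico, Finset.mem_range] at hx ⊢
      omega
    rw [autocorr, ← Finset.sum_subset hsub]
    · apply Finset.sum_congr rfl
      intro k hk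
      simp only [Finset.mem_Ico] at hk
      have hk1 : a (k : ℤ) = ζ ^ b k := hbspec k hk.1 (by omega)
      have hk2 : a ((k : ℤ) + t) = ζ ^ b (k + t) := by
        have : ((k : ℤ) + t) = ((k + t : ℕ) : ℤ) := by push_cast; ring
        rw [this]
        exact hbspec (k + t) (by omega) (by omega)
      rw [hk1, hk2, hconj, ← pow_add]
    · intro k hk hk'
      simp only [Finset.mem_range] at hk
      simp only [Finset.mem_Ico, not_and, not_lt] at hk'
      by_cases hks : k < s
      · rw [hzero k hks]; ring
      · -- then n + s - t ≤ k, so k + t wraps around to a zero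
        have hkt : n + s - t ≤ k := hk' (by omega)
        have hwrap : ((k : ℤ) + t) = ((k + t - (n + s) : ℕ) : ℤ) + ((n + s : ℕ) : ℤ) := by
          push_cast [Nat.cast_sub (by omega : n + s ≤ k + t)]
          ring
        have hm : k + t - (n + s) < s := by omega
        rw [hwrap, hper, hzero _ hm]
        simp
  -- the polynomial
  set P : Polynomial ℤ :=
    (∑ k ∈ Finset.Ico s (n + s - i), X ^ (b k + (p - 1) * b (k + i))) -
    (∑ k ∈ Finset.Ico s (n + s - j), X ^ (b k + (p - 1) * b (k + j))) with hP
  have haeval : Polynomial.aeval ζ P = 0 := by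
    rw [hP]
    simp only [map_sub, map_sum, map_pow, aeval_X]
    rw [← hauto i hi (by omega), ← hauto j (by omega) hj, heq, sub_self]
  have hdvdP : (p : ℤ) ∣ P.eval 1 := by
    have hcyc : cyclotomic p ℤ = minpoly ℤ ζ := cyclotomic_eq_minpoly hζ hppos
    have hmin : minpoly ℤ ζ ∣ P :=
      minpoly.isIntegrallyClosed_dvd (hζ.isIntegral hppos) haeval
    rw [← hcyc] at hmin
    obtain ⟨q, hq⟩ := hmin
    rw [hq, eval_mul]
    haveI : Fact p.Prime := ⟨hp⟩
    rw [eval_one_cyclotomic_prime]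
    exact Dvd.intro _ rfl
  have hevalP : P.eval 1 = (j : ℤ) - i := by
    rw [hP]
    simp only [eval_sub, eval_finset_sum, eval_pow, eval_X, one_pow, Finset.sum_const,
      nsmul_eq_mul, mul_one, Nat.card_Ico]
    have h1 : n + s - i - s = n - i := by omega
    have h2 : n + s - j - s = n - j := by omega
    rw [h1, h2]
    push_cast [Nat.cast_sub (by omega : i ≤ n), Nat.cast_sub (by omega : j ≤ n)]
    ring
  rw [hevalP] at hdvdP
  have : (j : ℤ) - i = ((j - i : ℕ) : ℤ) := by
    push_cast [Nat.cast_sub hij.le]; ring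
  rw [this] at hdvdP
  exact_mod_cast hdvdP
end

section
/- Let p be a prime, n ≥ 2 an integer, and γ1, γ2 integers. Let a be an almost p-ary sequence of period n+2 with a_0 = a_1 = 0 and a_i = ζ_p^{b_i} with b_i ∈ {0,1,…,p-1} for 2 ≤ i ≤ n+1, and let R = {(i, b_i) ∈ ZMod (n+2) × ZMod p : 2 ≤ i ≤ n+1}. Then a is a nearly perfect sequence of type (γ1, γ2) if and only if p divides n - γ2 - 2 and n - γ1 - 1 and R is an (n+2, p, n, (n-γ2-2)/p + γ2, 0, (n-γ1-1)/p + γ1, (n-γ2-2)/p, (n-γ1-1)/p)-PDPDS in ZMod (n+2) × ZMod p. -/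
open Finset

/-- `R` is an `(N, p, k, λ1, λ2, λ3, μ1, μ2)` partial direct product difference set
in `ZMod N × ZMod p` relative to `ZMod N × {0}` and `{0} × ZMod p`. -/
def IsPDPDS (N p k : ℕ) (l1 l2 l3 m1 m2 : ℤ) (R : Finset (ZMod N × ZMod p)) : Prop :=
  R.card = k ∧
  (∀ h : ZMod N, h ≠ 0 → h ≠ 1 → h ≠ -1 → (diffCount R (h, 0) : ℤ) = l1) ∧
  (∀ g : ZMod p, g ≠ 0 → (diffCount R (0, g) : ℤ) = l2) ∧
  (∀ h : ZMod N, h = 1 ∨ h = -1 → (diffCount R (h, 0) : ℤ) = l3) ∧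
  (∀ (h : ZMod N) (g : ZMod p), h ≠ 0 → h ≠ 1 → h ≠ -1 → g ≠ 0 →
    (diffCount R (h, g) : ℤ) = m1) ∧
  (∀ (h : ZMod N) (g : ZMod p), h = 1 ∨ h = -1 → g ≠ 0 →
    (diffCount R (h, g) : ℤ) = m2)


open Finset Polynomial

lemma sum_zmod_val {p : ℕ} [NeZero p] (F : ℕ → ℂ) :
    ∑ g : ZMod p, F g.val = ∑ i ∈ Finset.range p, F i := by
  refine Finset.sum_nbij' (fun g : ZMod p => g.val) (fun i : ℕ => (i : ZMod p))
    (fun g _ => Finset.mem_range.2 g.val_lt) (fun i _ => Finset.mem_univ _)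
    (fun g _ => ZMod.natCast_rightInverse g)
    (fun i hi => ZMod.val_cast_of_lt (Finset.mem_range.1 hi)) (fun g _ => rfl)

lemma key_lemma {p : ℕ} [NeZero p] (hp : p.Prime) {ζ : ℂ} (hζ : IsPrimitiveRoot ζ p)
    (c : ZMod p → ℕ) (γ : ℤ) (s : ℕ) (hs : ∑ g : ZMod p, c g = s) :
    (∑ g : ZMod p, (c g : ℂ) * ζ ^ g.val) = (γ : ℂ) ↔
      ((p : ℤ) ∣ (s : ℤ) - γ ∧ ((c 0 : ℤ) = ((s : ℤ) - γ) / p + γ ∧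
        ∀ g : ZMod p, g ≠ 0 → (c g : ℤ) = ((s : ℤ) - γ) / p)) := by
  haveI : NeZero p := ⟨hp.ne_zero⟩
  haveI : Fact p.Prime := ⟨hp⟩
  have hgeom : ∑ i ∈ Finset.range p, ζ ^ i = 0 := hζ.geom_sum_eq_zero hp.one_lt
  constructor
  · -- forward: linear independence via minimal polynomial
    intro hsum
    set d : ℕ → ℤ := fun i => (c (i : ZMod p) : ℤ) - (if i = 0 then γ else 0) with hd
    set P : Polynomial ℚ := ∑ i ∈ Finset.range p, Polynomial.C ((d i : ℚ)) * Polynomial.X ^ i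
      with hP
    have hPcoeff : ∀ k, P.coeff k = if k < p then (d k : ℚ) else 0 := by
      intro k
      rw [hP]
      simp only [Polynomial.finset_sum_coeff, Polynomial.coeff_C_mul, Polynomial.coeff_X_pow,
        mul_ite, mul_one, mul_zero]
      rw [Finset.sum_ite_eq (Finset.range p) k fun i => ((d i : ℚ))]
      simp [Finset.mem_range]
    have haeval : Polynomial.aeval ζ P = 0 := by
      rw [hP]
      have : ∀ i ∈ Finset.range p, Polynomial.aeval ζ
          (Polynomial.C ((d i : ℚ)) * Polynomial.X ^ i) = (d i : ℂ) * ζ ^ i := by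
        intro i _
        simp [Polynomial.aeval_C]
      rw [map_sum, Finset.sum_congr rfl this]
      have expand : ∑ i ∈ Finset.range p, ((d i : ℂ)) * ζ ^ i
          = (∑ i ∈ Finset.range p, (c (i : ZMod p) : ℂ) * ζ ^ i) - (γ : ℂ) := by
        have step : ∀ i ∈ Finset.range p, ((d i : ℂ)) * ζ ^ i
            = (c (i : ZMod p) : ℂ) * ζ ^ i - (if i = 0 then (γ : ℂ) else 0) := by
          intro i _
          rw [hd]
          push_cast
          by_cases hi : i = 0 <;> simp [hi] <;> ring
        rw [Finset.sum_congr rfl step, Finset.sum_sub_distrib]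
        congr 1
        simp [Finset.sum_ite_eq', Finset.mem_range, hp.pos]
      have hback : ∑ i ∈ Finset.range p, (c (i : ZMod p) : ℂ) * ζ ^ i
          = ∑ g : ZMod p, (c g : ℂ) * ζ ^ g.val := by
        rw [← sum_zmod_val (fun i => (c (i : ZMod p) : ℂ) * ζ ^ i)]
        refine Finset.sum_congr rfl fun g _ => ?_
        rw [ZMod.natCast_rightInverse g]
      rw [expand, hback, hsum, sub_self]
    have hmin : Polynomial.cyclotomic p ℚ = minpoly ℚ ζ :=
      Polynomial.cyclotomic_eq_minpoly_rat hζ hp.pos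
    have hdvd : Polynomial.cyclotomic p ℚ ∣ P := hmin ▸ minpoly.dvd ℚ ζ haeval
    obtain ⟨Q, hQ⟩ := hdvd
    have hcyc : Polynomial.cyclotomic p ℚ = ∑ i ∈ Finset.range p, Polynomial.X ^ i :=
      Polynomial.cyclotomic_prime ℚ p
    have hcyccoeff : ∀ k, k < p → (Polynomial.cyclotomic p ℚ).coeff k = 1 := by
      intro k hk
      rw [hcyc]
      simp only [Polynomial.finset_sum_coeff, Polynomial.coeff_X_pow]
      rw [Finset.sum_ite_eq (Finset.range p) k fun _ => (1 : ℚ)]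
      simp [Finset.mem_range, hk]
    -- all coefficients of P (below p) are equal to some rational q
    have hconst : ∃ q : ℚ, ∀ k, k < p → (d k : ℚ) = q := by
      by_cases hQ0 : Q = 0
      · refine ⟨0, fun k hk => ?_⟩
        have := hPcoeff k
        rw [hQ, hQ0, mul_zero, Polynomial.coeff_zero] at this
        simp only [if_pos hk] at this
        exact this.symm
      · have hcyc0 : Polynomial.cyclotomic p ℚ ≠ 0 := Polynomial.cyclotomic_ne_zero p ℚ
        have hdegP : P.natDegree ≤ p - 1 := by
          rw [Polynomial.natDegree_le_iff_coeff_eq_zero]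
          intro m hm
          rw [hPcoeff m, if_neg (by omega)]
        have hdegc : (Polynomial.cyclotomic p ℚ).natDegree = p - 1 := by
          rw [Polynomial.natDegree_cyclotomic, Nat.totient_prime hp]
        have hP0 : P ≠ 0 := by
          rw [hQ]; exact mul_ne_zero hcyc0 hQ0
        have : P.natDegree = (p - 1) + Q.natDegree := by
          rw [hQ, Polynomial.natDegree_mul hcyc0 hQ0, hdegc]
        have hQdeg : Q.natDegree = 0 := by omega
        obtain ⟨q, rfl⟩ := Polynomial.natDegree_eq_zero.mp hQdeg
        refine ⟨q, fun k hk => ?_⟩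
        have := hPcoeff k
        rw [hQ, Polynomial.coeff_mul_C, hcyccoeff k hk, one_mul, if_pos hk] at this
        exact this.symm
    obtain ⟨q, hq⟩ := hconst
    -- q is the integer d 1
    have hq1 : (d 1 : ℚ) = q := hq 1 hp.one_lt
    have hdk : ∀ k, k < p → d k = d 1 := by
      intro k hk
      have : (d k : ℚ) = (d 1 : ℚ) := by rw [hq k hk, hq1]
      exact_mod_cast this
    set m : ℤ := d 1 with hm
    have hsum_d : ∑ k ∈ Finset.range p, d k = (s : ℤ) - γ := by
      have : ∑ k ∈ Finset.range p, d k
          = (∑ k ∈ Finset.range p, (c (k : ZMod p) : ℤ)) - γ := by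
        rw [hd, Finset.sum_sub_distrib]
        congr 1
        rw [Finset.sum_ite_eq' (Finset.range p) 0 fun _ => γ]
        simp [hp.pos]
      rw [this]
      congr 1
      have : ∑ k ∈ Finset.range p, (c (k : ZMod p) : ℤ) = ∑ g : ZMod p, (c g : ℤ) := by
        refine (Finset.sum_nbij' (fun g : ZMod p => g.val) (fun i : ℕ => (i : ZMod p))
          (fun g _ => Finset.mem_range.2 g.val_lt) (fun i _ => Finset.mem_univ _)
          (fun g _ => ZMod.natCast_rightInverse g)
          (fun i hi => ZMod.val_cast_of_lt (Finset.mem_range.1 hi))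
          (fun g _ => by rw [ZMod.natCast_rightInverse g])).symm
      rw [this, ← hs]
      push_cast
      rfl
    have hpm : (s : ℤ) - γ = p * m := by
      rw [← hsum_d, Finset.sum_congr rfl (fun k hk => hdk k (Finset.mem_range.1 hk)),
        Finset.sum_const, Finset.card_range, nsmul_eq_mul]
    have hdiv : ((s : ℤ) - γ) / p = m := by
      rw [hpm, Int.mul_ediv_cancel_left _ (by exact_mod_cast hp.ne_zero)]
    refine ⟨⟨m, hpm⟩, ?_, ?_⟩
    · have h0 := hdk 0 hp.pos
      rw [hd] at h0
      simp only [Nat.cast_zero, if_pos rfl] at h0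
      rw [hdiv]
      have : (c (0 : ZMod p) : ℤ) - γ = m := by
        rw [← h0]; rfl
      omega
    · intro g hg
      have hgval : g.val < p := g.val_lt
      have := hdk g.val hgval
      rw [hd] at this
      have hval0 : g.val ≠ 0 := fun h => hg (by rwa [ZMod.val_eq_zero] at h)
      simp only [if_neg hval0, sub_zero, ZMod.natCast_rightInverse g] at this
      rw [hdiv, this]
  · -- backward: direct computation
    rintro ⟨hdvd, h0, hrest⟩
    set m : ℤ := ((s : ℤ) - γ) / p with hm
    have hpoint : ∀ g : ZMod p, (c g : ℂ) = (m : ℂ) + if g = 0 then (γ : ℂ) else 0 := by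
      intro g
      by_cases hg : g = 0
      · subst hg
        simp only [if_pos rfl]
        exact_mod_cast congrArg (fun z : ℤ => (z : ℂ)) h0
      · simp only [if_neg hg, add_zero]
        exact_mod_cast congrArg (fun z : ℤ => (z : ℂ)) (hrest g hg)
    calc ∑ g : ZMod p, (c g : ℂ) * ζ ^ g.val
        = ∑ g : ZMod p, ((m : ℂ) * ζ ^ g.val + (if g = 0 then (γ : ℂ) else 0) * ζ ^ g.val) := by
          refine Finset.sum_congr rfl fun g _ => ?_
          rw [hpoint g, add_mul]
      _ = (m : ℂ) * ∑ g : ZMod p, ζ ^ g.val + (γ : ℂ) := by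
          rw [Finset.sum_add_distrib, Finset.mul_sum]
          congr 1
          rw [Finset.sum_congr rfl (fun g _ => by rw [ite_mul, zero_mul])]
          rw [Finset.sum_ite_eq' Finset.univ (0 : ZMod p) fun g => (γ : ℂ) * ζ ^ g.val]
          simp [ZMod.val_zero]
      _ = (γ : ℂ) := by
          rw [sum_zmod_val (fun i => ζ ^ i), hgeom, mul_zero, zero_add]


section counting
variable {n : ℕ}

lemma zmod_val_one' : (1 : ZMod (n + 2)).val = 1 := by
  have : ((1 : ℕ) : ZMod (n + 2)).val = 1 := ZMod.val_cast_of_lt (by omega)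
  simpa using this

lemma zmod_eq_one_iff_val (x : ZMod (n + 2)) : x = 1 ↔ x.val = 1 := by
  constructor
  · rintro rfl; exact zmod_val_one'
  · intro h
    exact ZMod.val_injective _ (by rw [h, zmod_val_one'])

lemma not_two_le_val_iff (x : ZMod (n + 2)) : ¬ 2 ≤ x.val ↔ x = 0 ∨ x = 1 := by
  rw [← ZMod.val_eq_zero, zmod_eq_one_iff_val]
  omega

lemma zmod_one_ne_zero : (1 : ZMod (n + 2)) ≠ 0 := by
  intro h
  have h1 : (1 : ZMod (n+2)).val = 1 := zmod_val_one'
  rw [h, ZMod.val_zero] at h1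
  exact absurd h1 (by omega)

lemma zmod_two_val (hn : 2 ≤ n) : (2 : ZMod (n + 2)).val = 2 := by
  have : ((2 : ℕ) : ZMod (n + 2)).val = 2 := ZMod.val_cast_of_lt (by omega)
  simpa using this

lemma zmod_neg_one_ne_one (hn : 2 ≤ n) : (-1 : ZMod (n + 2)) ≠ 1 := by
  intro h
  have h2 : (2 : ZMod (n + 2)) = 0 := by linear_combination -h
  have := zmod_two_val (n := n) hn
  rw [h2, ZMod.val_zero] at this
  exact absurd this (by omega)

lemma card_Iset : (Finset.univ.filter fun x : ZMod (n + 2) => 2 ≤ x.val).card = n := by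
  have hsplit := Finset.card_filter_add_card_filter_not
    (s := (Finset.univ : Finset (ZMod (n + 2)))) (p := fun x => 2 ≤ x.val)
  have hneg : (Finset.univ.filter fun x : ZMod (n + 2) => ¬ 2 ≤ x.val) = {0, 1} := by
    ext x
    simp only [Finset.mem_filter, Finset.mem_univ, true_and, Finset.mem_insert,
      Finset.mem_singleton]
    exact not_two_le_val_iff x
  have hcard2 : ({0, 1} : Finset (ZMod (n + 2))).card = 2 := by
    rw [Finset.card_insert_of_notMem (by simp [(zmod_one_ne_zero (n := n)).symm]),
      Finset.card_singleton]
  have huniv : (Finset.univ : Finset (ZMod (n + 2))).card = n + 2 := by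
    rw [Finset.card_univ, ZMod.card]
  rw [hneg, hcard2, huniv] at hsplit
  omega

lemma val_range_of_ne (h : ZMod (n + 2)) (h0 : h ≠ 0) (h1 : h ≠ 1) (hm1 : h ≠ -1) :
    2 ≤ h.val ∧ h.val ≤ n := by
  have hv0 : h.val ≠ 0 := fun hc => h0 (by rwa [ZMod.val_eq_zero] at hc)
  have hv1 : h.val ≠ 1 := fun hc => h1 ((zmod_eq_one_iff_val h).2 hc)
  have hvlt : h.val < n + 2 := h.val_lt
  have hvn1 : h.val ≠ n + 1 := by
    intro hc
    apply hm1
    have : h = ((h.val : ℕ) : ZMod (n + 2)) := (ZMod.natCast_rightInverse h).symm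
    rw [this, hc]
    have : ((n + 2 : ℕ) : ZMod (n + 2)) = 0 := ZMod.natCast_self _
    push_cast at this ⊢
    linear_combination this
  omega

lemma ne_of_val_range (h : ZMod (n + 2)) (h2 : 2 ≤ h.val) (hn : h.val ≤ n) :
    h ≠ 0 ∧ h ≠ 1 ∧ h ≠ -1 := by
  refine ⟨fun hc => ?_, fun hc => ?_, fun hc => ?_⟩
  · rw [hc, ZMod.val_zero] at h2; omega
  · rw [(zmod_eq_one_iff_val h).1 hc] at h2; omega
  · have : h.val = n + 1 := by
      rw [hc]; exact ZMod.val_neg_one (n + 1)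
    omega

/-- Cardinality of the set counted by the sum of diffCounts, middle case. -/
lemma card_Sh_mid (hn : 2 ≤ n) (h : ZMod (n + 2)) (h0 : h ≠ 0) (h1 : h ≠ 1) (hm1 : h ≠ -1) :
    (Finset.univ.filter fun x : ZMod (n + 2) => 2 ≤ x.val ∧ 2 ≤ (x + h).val).card = n - 2 := by
  classical
  have hIs : (Finset.univ.filter fun x : ZMod (n + 2) => 2 ≤ x.val ∧ 2 ≤ (x + h).val)
      = (Finset.univ.filter fun x : ZMod (n + 2) => 2 ≤ x.val).filter
        (fun x => 2 ≤ (x + h).val) := by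
    rw [Finset.filter_filter]
  have hsplit := Finset.card_filter_add_card_filter_not
    (s := Finset.univ.filter fun x : ZMod (n + 2) => 2 ≤ x.val)
    (p := fun x => 2 ≤ (x + h).val)
  have hbad : ((Finset.univ.filter fun x : ZMod (n + 2) => 2 ≤ x.val).filter
      (fun x => ¬ 2 ≤ (x + h).val)) = {-h, 1 - h} := by
    ext x
    simp only [Finset.mem_filter, Finset.mem_univ, true_and, Finset.mem_insert,
      Finset.mem_singleton, not_two_le_val_iff]
    constructor
    · rintro ⟨hx, hc | hc⟩
      · left; linear_combination hc
      · right; linear_combination hc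
    · rintro (rfl | rfl)
      · refine ⟨?_, Or.inl (by ring)⟩
        by_contra hc
        rcases (not_two_le_val_iff (-h)).1 hc with hc' | hc'
        · exact h0 (by linear_combination -hc')
        · exact hm1 (by linear_combination -hc')
      · refine ⟨?_, Or.inr (by ring)⟩
        by_contra hc
        rcases (not_two_le_val_iff (1 - h)).1 hc with hc' | hc'
        · exact h1 (by linear_combination -hc')
        · exact h0 (by linear_combination -hc')
  have hbadcard : ({-h, 1 - h} : Finset (ZMod (n + 2))).card = 2 := by
    rw [Finset.card_insert_of_notMem, Finset.card_singleton]
    simp only [Finset.mem_singleton]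
    intro hc
    exact zmod_one_ne_zero (n := n) (by linear_combination -hc)
  rw [hIs] at *
  rw [hbad, hbadcard] at hsplit
  rw [card_Iset] at hsplit
  omega

lemma card_Sh_pm (hn : 2 ≤ n) (h : ZMod (n + 2)) (hpm : h = 1 ∨ h = -1) :
    (Finset.univ.filter fun x : ZMod (n + 2) => 2 ≤ x.val ∧ 2 ≤ (x + h).val).card = n - 1 := by
  classical
  have hIs : (Finset.univ.filter fun x : ZMod (n + 2) => 2 ≤ x.val ∧ 2 ≤ (x + h).val)
      = (Finset.univ.filter fun x : ZMod (n + 2) => 2 ≤ x.val).filter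
        (fun x => 2 ≤ (x + h).val) := by
    rw [Finset.filter_filter]
  have hsplit := Finset.card_filter_add_card_filter_not
    (s := Finset.univ.filter fun x : ZMod (n + 2) => 2 ≤ x.val)
    (p := fun x => 2 ≤ (x + h).val)
  have hbad : ∃ z : ZMod (n + 2),
      ((Finset.univ.filter fun x : ZMod (n + 2) => 2 ≤ x.val).filter
      (fun x => ¬ 2 ≤ (x + h).val)) = {z} := by
    rcases hpm with rfl | rfl
    · refine ⟨-1, ?_⟩
      ext x
      simp only [Finset.mem_filter, Finset.mem_univ, true_and, Finset.mem_singleton,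
        not_two_le_val_iff]
      constructor
      · rintro ⟨hx, hc | hc⟩
        · linear_combination hc
        · exfalso
          exact (not_two_le_val_iff x).2 (Or.inl (by linear_combination hc)) hx
      · rintro rfl
        refine ⟨?_, Or.inl (by ring)⟩
        by_contra hc
        rcases (not_two_le_val_iff (-1 : ZMod (n+2))).1 hc with hc' | hc'
        · exact zmod_one_ne_zero (n := n) (by linear_combination -hc')
        · exact zmod_neg_one_ne_one hn hc'
    · refine ⟨2, ?_⟩
      ext x
      simp only [Finset.mem_filter, Finset.mem_univ, true_and, Finset.mem_singleton,
        not_two_le_val_iff]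
      constructor
      · rintro ⟨hx, hc | hc⟩
        · exfalso
          exact (not_two_le_val_iff x).2 (Or.inr (by linear_combination hc)) hx
        · linear_combination hc
      · rintro rfl
        refine ⟨?_, Or.inr (by ring)⟩
        rw [zmod_two_val hn]
  obtain ⟨z, hbad⟩ := hbad
  rw [hIs] at *
  rw [hbad, Finset.card_singleton] at hsplit
  rw [card_Iset] at hsplit
  omega

end counting

section dc

variable {n p : ℕ} [NeZero p] (b : ℕ → ℕ) (R : Finset (ZMod (n + 2) × ZMod p))
  (hR : ∀ x : ZMod (n + 2) × ZMod p,
    x ∈ R ↔ 2 ≤ x.1.val ∧ x.1.val ≤ n + 1 ∧ x.2 = (b x.1.val : ZMod p))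

include hR

lemma mem_R_iff (x : ZMod (n + 2) × ZMod p) :
    x ∈ R ↔ 2 ≤ x.1.val ∧ x.2 = (b x.1.val : ZMod p) := by
  rw [hR x]
  have := x.1.val_lt
  constructor
  · rintro ⟨h1, _, h3⟩; exact ⟨h1, h3⟩
  · rintro ⟨h1, h3⟩; exact ⟨h1, by omega, h3⟩

lemma diffCount_zero (g : ZMod p) : diffCount R (0, g) = 0 := by
  rw [diffCount, Finset.card_eq_zero, Finset.filter_eq_empty_iff]
  rintro x hx ⟨hne, hdiff⟩
  rw [Finset.mem_product] at hx
  obtain ⟨hx1, hx2⟩ := hx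
  rw [Prod.ext_iff] at hdiff
  obtain ⟨hd1, hd2⟩ := hdiff
  simp only [Prod.fst_sub, Prod.snd_sub] at hd1 hd2
  have heq1 : x.1.1 = x.2.1 := by
    have : x.1.1 - x.2.1 = 0 := hd1
    linear_combination this
  apply hne
  have e1 := ((mem_R_iff b R hR _).1 hx1).2
  have e2 := ((mem_R_iff b R hR _).1 hx2).2
  refine Prod.ext heq1 ?_
  rw [e1, e2, heq1]

lemma diffCount_eq (h : ZMod (n + 2)) (g : ZMod p) (h0 : h ≠ 0) :
    diffCount R (h, g) = (Finset.univ.filter fun x : ZMod (n + 2) =>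
      (2 ≤ x.val ∧ 2 ≤ (x + h).val) ∧
        ((b (x + h).val : ZMod p) - (b x.val : ZMod p) = g)).card := by
  rw [diffCount]
  refine (Finset.card_nbij'
    (fun x : ZMod (n + 2) => (((x + h, ((b (x + h).val : ZMod p))) : ZMod (n+2) × ZMod p),
      ((x, ((b x.val : ZMod p))) : ZMod (n+2) × ZMod p)))
    (fun r => r.2.1) ?_ ?_ ?_ ?_).symm
  · intro x hx
    rw [Finset.mem_coe, Finset.mem_filter] at hx
    obtain ⟨-, ⟨hx1, hx2⟩, hx3⟩ := hx
    rw [Finset.mem_coe, Finset.mem_filter, Finset.mem_product]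
    refine ⟨⟨(mem_R_iff b R hR _).2 ⟨hx2, rfl⟩, (mem_R_iff b R hR _).2 ⟨hx1, rfl⟩⟩, ?_, ?_⟩
    · intro hc
      rw [Prod.ext_iff] at hc
      exact h0 (by linear_combination hc.1)
    · refine Prod.ext (by simp) (by simpa using hx3)
  · intro r hr
    rw [Finset.mem_coe, Finset.mem_filter, Finset.mem_product] at hr
    obtain ⟨⟨hr1, hr2⟩, hne, hdiff⟩ := hr
    rw [Prod.ext_iff] at hdiff
    obtain ⟨hd1, hd2⟩ := hdiff
    simp only [Prod.fst_sub, Prod.snd_sub] at hd1 hd2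
    have e1 := (mem_R_iff b R hR _).1 hr1
    have e2 := (mem_R_iff b R hR _).1 hr2
    have hfst : r.1.1 = r.2.1 + h := by linear_combination hd1
    rw [Finset.mem_coe, Finset.mem_filter]
    refine ⟨Finset.mem_univ _, ⟨e2.1, ?_⟩, ?_⟩
    · rw [← hfst]; exact e1.1
    · rw [← hfst, ← e1.2, ← e2.2]; exact hd2
  · intro x hx; rfl
  · intro r hr
    rw [Finset.mem_coe, Finset.mem_filter, Finset.mem_product] at hr
    obtain ⟨⟨hr1, hr2⟩, hne, hdiff⟩ := hr
    rw [Prod.ext_iff] at hdiff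
    obtain ⟨hd1, hd2⟩ := hdiff
    simp only [Prod.fst_sub, Prod.snd_sub] at hd1 hd2
    have e1 := (mem_R_iff b R hR _).1 hr1
    have e2 := (mem_R_iff b R hR _).1 hr2
    have hfst : r.1.1 = r.2.1 + h := by linear_combination hd1
    have e1' : r.1.2 = ((b (r.2.1 + h).val : ZMod p)) := by rw [← hfst]; exact e1.2
    show ((r.2.1 + h, ((b (r.2.1 + h).val : ZMod p))), (r.2.1, ((b r.2.1.val : ZMod p)))) = r
    symm
    exact Prod.ext (Prod.ext hfst e1') (Prod.ext rfl e2.2)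

lemma card_R_eq : R.card = (Finset.univ.filter fun x : ZMod (n + 2) => 2 ≤ x.val).card := by
  refine Finset.card_nbij' (fun r => r.1) (fun x => (x, ((b x.val : ZMod p)))) ?_ ?_ ?_ ?_
  · intro r hr
    rw [Finset.mem_coe, Finset.mem_filter]
    exact ⟨Finset.mem_univ _, ((mem_R_iff b R hR _).1 hr).1⟩
  · intro x hx
    rw [Finset.mem_coe, Finset.mem_filter] at hx
    exact (mem_R_iff b R hR _).2 ⟨hx.2, rfl⟩
  · intro r hr
    exact (Prod.ext rfl ((mem_R_iff b R hR _).1 hr).2.symm)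
  · intro x hx; rfl

end dc

section central
open Finset

lemma central_lemma {p n : ℕ} (hp : p.Prime) {ζ : ℂ} (hζ : IsPrimitiveRoot ζ p)
    (a : ℤ → ℂ)
    (hper : ∀ i : ℤ, a (i + (n + 2 : ℕ)) = a i)
    (ha0 : a 0 = 0) (ha1 : a 1 = 0)
    (b : ℕ → ℕ)
    (hval : ∀ i : ℕ, 2 ≤ i → i ≤ n + 1 → a (i : ℤ) = ζ ^ (b i))
    (R : Finset (ZMod (n + 2) × ZMod p))
    (hR : ∀ x : ZMod (n + 2) × ZMod p,
      x ∈ R ↔ 2 ≤ x.1.val ∧ x.1.val ≤ n + 1 ∧ x.2 = (b x.1.val : ZMod p))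
    (h : ZMod (n + 2)) (h0 : h ≠ 0) (t : ℕ) (ht : (t : ZMod (n + 2)) = h)
    (γ : ℤ) (s : ℕ)
    (hs : (Finset.univ.filter fun x : ZMod (n + 2) =>
      2 ≤ x.val ∧ 2 ≤ (x + h).val).card = s) :
    autocorr (n + 2) a (t : ℤ) = (γ : ℂ) ↔
      ((p : ℤ) ∣ (s : ℤ) - γ ∧ ((diffCount R (h, 0) : ℤ) = ((s : ℤ) - γ) / p + γ ∧
        ∀ g : ZMod p, g ≠ 0 → (diffCount R (h, g) : ℤ) = ((s : ℤ) - γ) / p)) := by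
  classical
  haveI : NeZero p := ⟨hp.ne_zero⟩
  have hζ1 : ζ ^ p = 1 := hζ.pow_eq_one
  have hζ0 : ζ ≠ 0 := by
    intro hc
    rw [hc, zero_pow hp.ne_zero] at hζ1
    exact zero_ne_one hζ1
  have hnorm : ‖ζ‖ = 1 := Complex.norm_eq_one_of_pow_eq_one hζ1 hp.ne_zero
  have hconj : (starRingEnd ℂ) ζ = ζ⁻¹ := (Complex.inv_eq_conj hnorm).symm
  -- ζ to an integer power depends only on the exponent mod p
  have hzmod : ∀ k : ℤ, ζ ^ k = ζ ^ (((k : ZMod p)).val) := by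
    intro k
    have hcast : (((((k : ZMod p)).val : ℕ) : ℤ) : ZMod p) = (k : ZMod p) := by
      push_cast
      rw [ZMod.natCast_rightInverse]
    have hdvd : (p : ℤ) ∣ k - ((k : ZMod p)).val := by
      rw [← ZMod.intCast_zmod_eq_zero_iff_dvd]
      push_cast at hcast ⊢
      rw [hcast, sub_self]
    obtain ⟨m, hm⟩ := hdvd
    have hk : k = (((k : ZMod p)).val : ℤ) + (p : ℤ) * m := by linear_combination hm
    calc ζ ^ k = ζ ^ ((((k : ZMod p)).val : ℤ) + (p : ℤ) * m) := by rw [← hk]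
      _ = ζ ^ (((k : ZMod p)).val) := by
          rw [zpow_add₀ hζ0, zpow_natCast, zpow_mul, zpow_natCast, hζ1, one_zpow, mul_one]
  -- the sequence as a function on ZMod (n+2)
  set A : ZMod (n + 2) → ℂ := fun x => if 2 ≤ x.val then ζ ^ (b x.val) else 0 with hA
  have haz : ∀ i : ℤ, a i = A ((i : ZMod (n + 2))) := by
    intro i
    set x : ZMod (n + 2) := (i : ZMod (n + 2)) with hx
    have hcast : ((((x.val : ℕ) : ℤ)) : ZMod (n + 2)) = x := by
      push_cast
      rw [ZMod.natCast_rightInverse]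
    have hdvd : ((n + 2 : ℕ) : ℤ) ∣ i - (x.val : ℤ) := by
      rw [← ZMod.intCast_zmod_eq_zero_iff_dvd]
      push_cast at hcast ⊢
      rw [hcast, hx, sub_self]
    obtain ⟨m, hm⟩ := hdvd
    have hper' : Function.Periodic a ((n + 2 : ℕ) : ℤ) := hper
    have hstep : a (i - m • ((n + 2 : ℕ) : ℤ)) = a i := hper'.sub_zsmul_eq m
    have harg : i - m • ((n + 2 : ℕ) : ℤ) = (x.val : ℤ) := by
      rw [zsmul_eq_mul]
      linear_combination hm
    rw [harg] at hstep
    rw [← hstep, hA]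
    by_cases h2 : 2 ≤ x.val
    · have hle : x.val ≤ n + 1 := by have := x.val_lt; omega
      rw [hval x.val h2 hle]
      simp [h2]
    · have : x.val = 0 ∨ x.val = 1 := by omega
      rcases this with hv | hv <;> rw [hv] <;> simp [h2, hv] <;> simp_all [ha0, ha1]
  -- the multiplicative term
  have main : ∀ k l : ℕ, ζ ^ k * (starRingEnd ℂ) (ζ ^ l)
      = ζ ^ ((-(((l : ZMod p)) - ((k : ZMod p)))).val) := by
    intro k l
    rw [map_pow, hconj]
    have e1 : ζ ^ k * (ζ⁻¹) ^ l = ζ ^ ((k : ℤ) - (l : ℤ)) := by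
      rw [inv_pow, ← zpow_natCast ζ k, ← zpow_natCast ζ l, ← zpow_neg,
        ← zpow_add₀ hζ0]
      ring_nf
    rw [e1, hzmod ((k : ℤ) - (l : ℤ))]
    congr 1
    have : (((k : ℤ) - (l : ℤ) : ℤ) : ZMod p) = -(((l : ZMod p)) - ((k : ZMod p))) := by
      push_cast
      ring
    rw [this]
  -- rewrite the autocorrelation as a sum over ZMod (n+2)
  have hauto : autocorr (n + 2) a (t : ℤ)
      = ∑ x : ZMod (n + 2), A x * (starRingEnd ℂ) (A (x + h)) := by
    rw [autocorr]
    have step : ∀ i ∈ Finset.range (n + 2),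
        a (i : ℤ) * (starRingEnd ℂ) (a ((i : ℤ) + (t : ℤ)))
          = A (((i : ℕ) : ZMod (n + 2))) * (starRingEnd ℂ)
              (A ((((i : ℕ) : ZMod (n + 2))) + h)) := by
      intro i _
      rw [haz (i : ℤ), haz ((i : ℤ) + (t : ℤ))]
      have : (((i : ℤ) + (t : ℤ) : ℤ) : ZMod (n + 2)) = ((i : ℕ) : ZMod (n + 2)) + h := by
        push_cast
        rw [ht]
      rw [this]
      norm_cast
    rw [Finset.sum_congr rfl step]
    rw [← sum_zmod_val (fun i => A ((i : ZMod (n + 2))) * (starRingEnd ℂ)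
      (A (((i : ZMod (n + 2))) + h)))]
    refine Finset.sum_congr rfl fun x _ => ?_
    rw [ZMod.natCast_rightInverse x]
  -- pointwise formula
  have hterm : ∀ x : ZMod (n + 2), A x * (starRingEnd ℂ) (A (x + h))
      = if 2 ≤ x.val ∧ 2 ≤ (x + h).val then
          ζ ^ ((-(((b (x + h).val : ZMod p)) - ((b x.val : ZMod p)))).val) else 0 := by
    intro x
    simp only [hA]
    by_cases h1 : 2 ≤ x.val
    · by_cases h2 : 2 ≤ (x + h).val
      · rw [if_pos h1, if_pos h2, if_pos ⟨h1, h2⟩]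
        exact main (b x.val) (b (x + h).val)
      · rw [if_pos h1, if_neg h2, if_neg (fun hc : 2 ≤ x.val ∧ 2 ≤ (x+h).val => h2 hc.2), map_zero, mul_zero]
    · rw [if_neg h1, if_neg (fun hc : 2 ≤ x.val ∧ 2 ≤ (x+h).val => h1 hc.1), zero_mul]
  have hchain : autocorr (n + 2) a (t : ℤ)
      = ∑ g : ZMod p, (((Finset.univ.filter fun x : ZMod (n + 2) =>
          2 ≤ x.val ∧ 2 ≤ (x + h).val).filter fun x =>
            ((b (x + h).val : ZMod p)) - ((b x.val : ZMod p)) = -g).card : ℂ) * ζ ^ g.val := by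
    rw [hauto, Finset.sum_congr rfl fun x _ => hterm x, ← Finset.sum_filter]
    rw [← Finset.sum_fiberwise (Finset.univ.filter fun x : ZMod (n + 2) =>
        2 ≤ x.val ∧ 2 ≤ (x + h).val)
      (fun x => ((b (x + h).val : ZMod p)) - ((b x.val : ZMod p)))
      (fun x => ζ ^ ((-(((b (x + h).val : ZMod p)) - ((b x.val : ZMod p)))).val))]
    refine Fintype.sum_equiv (Equiv.neg (ZMod p)) _ _ fun g => ?_
    simp only [Equiv.neg_apply, neg_neg]
    rw [Finset.sum_congr rfl fun x hx => by rw [(Finset.mem_filter.1 hx).2]]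
    rw [Finset.sum_const, nsmul_eq_mul]
  -- diffCount in terms of fibers
  have hDC : ∀ g : ZMod p, diffCount R (h, g)
      = ((Finset.univ.filter fun x : ZMod (n + 2) =>
          2 ≤ x.val ∧ 2 ≤ (x + h).val).filter fun x =>
            ((b (x + h).val : ZMod p)) - ((b x.val : ZMod p)) = g).card := by
    intro g
    rw [diffCount_eq b R hR h g h0, Finset.filter_filter]
  have hDCint : ∀ g : ZMod p, (diffCount R (h, g) : ℤ)
      = (((Finset.univ.filter fun x : ZMod (n + 2) =>
          2 ≤ x.val ∧ 2 ≤ (x + h).val).filter fun x =>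
            ((b (x + h).val : ZMod p)) - ((b x.val : ZMod p)) = g).card : ℤ) := by
    intro g
    exact_mod_cast congrArg (fun k : ℕ => (k : ℤ)) (hDC g)
  have hsumc : ∑ g : ZMod p, ((Finset.univ.filter fun x : ZMod (n + 2) =>
      2 ≤ x.val ∧ 2 ≤ (x + h).val).filter fun x =>
        ((b (x + h).val : ZMod p)) - ((b x.val : ZMod p)) = -g).card = s := by
    have e1 : ∑ g : ZMod p, ((Finset.univ.filter fun x : ZMod (n + 2) =>
        2 ≤ x.val ∧ 2 ≤ (x + h).val).filter fun x =>
          ((b (x + h).val : ZMod p)) - ((b x.val : ZMod p)) = -g).card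
        = ∑ g : ZMod p, ((Finset.univ.filter fun x : ZMod (n + 2) =>
        2 ≤ x.val ∧ 2 ≤ (x + h).val).filter fun x =>
          ((b (x + h).val : ZMod p)) - ((b x.val : ZMod p)) = g).card :=
      Fintype.sum_equiv (Equiv.neg (ZMod p)) _ _ (fun g => by
        simp only [Equiv.neg_apply])
    rw [e1, ← Finset.card_eq_sum_card_fiberwise
      (f := fun x => ((b (x + h).val : ZMod p)) - ((b x.val : ZMod p)))
      (t := (Finset.univ : Finset (ZMod p))) (fun x _ => Finset.mem_univ _), hs]
  have keyiff := key_lemma hp hζ (fun g : ZMod p =>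
    ((Finset.univ.filter fun x : ZMod (n + 2) =>
      2 ≤ x.val ∧ 2 ≤ (x + h).val).filter fun x =>
        ((b (x + h).val : ZMod p)) - ((b x.val : ZMod p)) = -g).card) γ s hsumc
  constructor
  · intro hγ
    rw [hchain] at hγ
    obtain ⟨h1, h2, h3⟩ := keyiff.1 hγ
    refine ⟨h1, ?_, ?_⟩
    · rw [hDCint 0]
      simpa only [neg_zero] using h2
    · intro g hg
      rw [hDCint g]
      have := h3 (-g) (neg_ne_zero.2 hg)
      simpa only [neg_neg] using this
  · rintro ⟨h1, h2, h3⟩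
    rw [hchain]
    refine keyiff.2 ⟨h1, ?_, ?_⟩
    · show (((Finset.univ.filter fun x : ZMod (n + 2) =>
        2 ≤ x.val ∧ 2 ≤ (x + h).val).filter fun x =>
          ((b (x + h).val : ZMod p)) - ((b x.val : ZMod p)) = -(0 : ZMod p)).card : ℤ)
        = ((s : ℤ) - γ) / p + γ
      simp only [neg_zero]
      rw [← hDCint 0]
      exact h2
    · intro g hg
      show (((Finset.univ.filter fun x : ZMod (n + 2) =>
        2 ≤ x.val ∧ 2 ≤ (x + h).val).filter fun x =>
          ((b (x + h).val : ZMod p)) - ((b x.val : ZMod p)) = -g).card : ℤ)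
        = ((s : ℤ) - γ) / p
      rw [← hDCint (-g)]
      exact h3 (-g) (neg_ne_zero.2 hg)

end central

theorem stmt7 (p n : ℕ) (hp : p.Prime) (hn : 2 ≤ n) (γ1 γ2 : ℤ)
    (ζ : ℂ) (hζ : IsPrimitiveRoot ζ p)
    (a : ℤ → ℂ)
    (hper : ∀ i : ℤ, a (i + (n + 2 : ℕ)) = a i)
    (ha0 : a 0 = 0) (ha1 : a 1 = 0)
    (b : ℕ → ℕ) (hb : ∀ i : ℕ, 2 ≤ i → i ≤ n + 1 → b i < p)
    (hval : ∀ i : ℕ, 2 ≤ i → i ≤ n + 1 → a (i : ℤ) = ζ ^ (b i))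
    (R : Finset (ZMod (n + 2) × ZMod p))
    (hR : ∀ x : ZMod (n + 2) × ZMod p,
      x ∈ R ↔ 2 ≤ x.1.val ∧ x.1.val ≤ n + 1 ∧ x.2 = (b x.1.val : ZMod p)) :
    (autocorr (n + 2) a 1 = (γ1 : ℂ) ∧ autocorr (n + 2) a ((n : ℤ) + 1) = (γ1 : ℂ) ∧
      ∀ t : ℕ, 2 ≤ t → t ≤ n → autocorr (n + 2) a (t : ℤ) = (γ2 : ℂ)) ↔
    ((p : ℤ) ∣ (n : ℤ) - γ2 - 2 ∧ (p : ℤ) ∣ (n : ℤ) - γ1 - 1 ∧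
      IsPDPDS (n + 2) p n
        (((n : ℤ) - γ2 - 2) / p + γ2) 0 (((n : ℤ) - γ1 - 1) / p + γ1)
        (((n : ℤ) - γ2 - 2) / p) (((n : ℤ) - γ1 - 1) / p) R) := by
  classical
  haveI : NeZero p := ⟨hp.ne_zero⟩
  have hm1cast : ((n + 1 : ℕ) : ZMod (n + 2)) = -1 := by
    have h0 : ((n + 2 : ℕ) : ZMod (n + 2)) = 0 := ZMod.natCast_self _
    push_cast at h0 ⊢
    linear_combination h0
  have h1ne : (1 : ZMod (n + 2)) ≠ 0 := zmod_one_ne_zero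
  have hm1ne : (-1 : ZMod (n + 2)) ≠ 0 := by
    intro hc; exact h1ne (by linear_combination -hc)
  have Hpm : ∀ (h : ZMod (n+2)) (t : ℕ), (t : ZMod (n+2)) = h → (h = 1 ∨ h = -1) →
      (autocorr (n + 2) a (t : ℤ) = (γ1 : ℂ) ↔
        ((p : ℤ) ∣ (n : ℤ) - γ1 - 1 ∧
          ((diffCount R (h, 0) : ℤ) = ((n : ℤ) - γ1 - 1) / p + γ1 ∧
          ∀ g : ZMod p, g ≠ 0 → (diffCount R (h, g) : ℤ) = ((n : ℤ) - γ1 - 1) / p))) := by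
    intro h t ht hpm
    have h0 : h ≠ 0 := by
      rcases hpm with rfl | rfl
      · exact h1ne
      · exact hm1ne
    have hcc := central_lemma hp hζ a hper ha0 ha1 b hval R hR h h0 t ht γ1 (n-1)
      (card_Sh_pm hn h hpm)
    have ecast : ((n - 1 : ℕ) : ℤ) - γ1 = (n : ℤ) - γ1 - 1 := by omega
    rw [ecast] at hcc
    exact hcc
  have Hmid : ∀ (h : ZMod (n+2)) (t : ℕ), (t : ZMod (n+2)) = h →
      h ≠ 0 → h ≠ 1 → h ≠ -1 →
      (autocorr (n + 2) a (t : ℤ) = (γ2 : ℂ) ↔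
        ((p : ℤ) ∣ (n : ℤ) - γ2 - 2 ∧
          ((diffCount R (h, 0) : ℤ) = ((n : ℤ) - γ2 - 2) / p + γ2 ∧
          ∀ g : ZMod p, g ≠ 0 → (diffCount R (h, g) : ℤ) = ((n : ℤ) - γ2 - 2) / p))) := by
    intro h t ht h0 h1 hm1
    have hcc := central_lemma hp hζ a hper ha0 ha1 b hval R hR h h0 t ht γ2 (n-2)
      (card_Sh_mid hn h h0 h1 hm1)
    have ecast : ((n - 2 : ℕ) : ℤ) - γ2 = (n : ℤ) - γ2 - 2 := by omega
    rw [ecast] at hcc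
    exact hcc
  constructor
  · rintro ⟨H1, H2, H3⟩
    have hA1 : autocorr (n+2) a ((1 : ℕ) : ℤ) = (γ1 : ℂ) := by simpa using H1
    have hAm1 : autocorr (n+2) a ((n+1 : ℕ) : ℤ) = (γ1 : ℂ) := by push_cast; exact H2
    have c1 := (Hpm 1 1 (by norm_num) (Or.inl rfl)).1 hA1
    have cm1 := (Hpm (-1) (n+1) hm1cast (Or.inr rfl)).1 hAm1
    have h2val : ((2 : ℕ) : ZMod (n+2)).val = 2 := ZMod.val_cast_of_lt (by omega)
    obtain ⟨h20, h21, h2m1⟩ := ne_of_val_range ((2:ℕ) : ZMod (n+2))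
      (by rw [h2val]) (by rw [h2val]; exact hn)
    have c2 := (Hmid ((2:ℕ) : ZMod (n+2)) 2 rfl h20 h21 h2m1).1 (H3 2 le_rfl hn)
    refine ⟨c2.1, c1.1, (card_R_eq b R hR).trans card_Iset, ?_, ?_, ?_, ?_, ?_⟩
    · intro h h0 h1 hm1
      obtain ⟨hv2, hvn⟩ := val_range_of_ne h h0 h1 hm1
      have ht : ((h.val : ℕ) : ZMod (n+2)) = h := ZMod.natCast_rightInverse h
      exact ((Hmid h h.val ht h0 h1 hm1).1 (H3 h.val hv2 hvn)).2.1
    · intro g hg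
      rw [diffCount_zero b R hR g]
      norm_num
    · rintro h (rfl | rfl)
      · exact c1.2.1
      · exact cm1.2.1
    · intro h g h0 h1 hm1 hg
      obtain ⟨hv2, hvn⟩ := val_range_of_ne h h0 h1 hm1
      have ht : ((h.val : ℕ) : ZMod (n+2)) = h := ZMod.natCast_rightInverse h
      exact ((Hmid h h.val ht h0 h1 hm1).1 (H3 h.val hv2 hvn)).2.2 g hg
    · rintro h g (rfl | rfl) hg
      · exact c1.2.2 g hg
      · exact cm1.2.2 g hg
  · rintro ⟨D2, D1, hcard, L1, L2, L3, M1, M2⟩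
    refine ⟨?_, ?_, ?_⟩
    · have := (Hpm 1 1 (by norm_num) (Or.inl rfl)).2
        ⟨D1, L3 1 (Or.inl rfl), fun g hg => M2 1 g (Or.inl rfl) hg⟩
      simpa using this
    · have := (Hpm (-1) (n+1) hm1cast (Or.inr rfl)).2
        ⟨D1, L3 (-1) (Or.inr rfl), fun g hg => M2 (-1) g (Or.inr rfl) hg⟩
      push_cast at this ⊢
      exact this
    · intro t h2t htn
      have hvt : ((t : ℕ) : ZMod (n+2)).val = t := ZMod.val_cast_of_lt (by omega)
      obtain ⟨h0, h1, hm1⟩ := ne_of_val_range ((t : ℕ) : ZMod (n+2))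
        (by rw [hvt]; exact h2t) (by rw [hvt]; exact htn)
      exact (Hmid _ t rfl h0 h1 hm1).2
        ⟨D2, L1 _ h0 h1 hm1, fun g hg => M1 _ g h0 h1 hm1 hg⟩
end

section
/- Let p be a prime, n ≥ 2 an integer, and γ1, γ2 integers. If there exists an almost p-ary nearly perfect sequence of type (γ1, γ2) and period n+2 with two consecutive zero-symbols, then p divides n - γ2 - 2 and p divides n - γ1 - 1, and moreover -(n-γ2-2)/p ≤ γ2 ≤ n - 2 and -(n-γ1-1)/p ≤ γ1 ≤ n - 1. -/
open Finset

section Aux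

/-- If an integer combination of `1, ζ, …, ζ^{p-1}` vanishes for `ζ` a primitive `p`-th root
of unity (`p` prime), then all coefficients are equal. -/
lemma coeffs_const_aux8 {p : ℕ} (hp : p.Prime) {ζ : ℂ} (hζ : IsPrimitiveRoot ζ p)
    (c : ℕ → ℤ) (h : ∑ j ∈ Finset.range p, (c j : ℂ) * ζ ^ j = 0) :
    ∀ j < p, ∀ k < p, c j = c k := by
  have hpos := hp.pos
  set q : Polynomial ℚ := ∑ j ∈ Finset.range p, Polynomial.monomial j ((c j : ℚ)) with hqdef
  have hcoeff : ∀ j < p, q.coeff j = (c j : ℚ) := by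
    intro j hj
    rw [hqdef, Polynomial.finset_sum_coeff]
    simp only [Polynomial.coeff_monomial]
    rw [Finset.sum_ite_eq' (Finset.range p) j (fun k => (c k : ℚ))]
    simp [Finset.mem_range.mpr hj]
  have haeval : Polynomial.aeval ζ q = 0 := by
    rw [hqdef, map_sum, ← h]
    apply Finset.sum_congr rfl
    intro j hj
    rw [Polynomial.aeval_monomial, eq_ratCast (algebraMap ℚ ℂ)]
    push_cast
    ring
  have key : ∃ r0 : ℚ, ∀ j < p, (c j : ℚ) = r0 := by
    by_cases hq0 : q = 0
    · exact ⟨0, fun j hj => by rw [← hcoeff j hj, hq0, Polynomial.coeff_zero]⟩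
    have hdvd : Polynomial.cyclotomic p ℚ ∣ q := by
      rw [Polynomial.cyclotomic_eq_minpoly_rat hζ hpos]
      exact minpoly.dvd ℚ ζ haeval
    obtain ⟨r, hr⟩ := hdvd
    have hr0 : r ≠ 0 := by
      rintro rfl
      rw [mul_zero] at hr
      exact hq0 hr
    have hcyc0 : Polynomial.cyclotomic p ℚ ≠ 0 := Polynomial.cyclotomic_ne_zero p ℚ
    have hdegq : q.natDegree ≤ p - 1 := by
      rw [hqdef]
      apply Polynomial.natDegree_sum_le_of_forall_le
      intro j hj
      exact (Polynomial.natDegree_monomial_le _).trans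
        (by have := Finset.mem_range.mp hj; omega)
    have hdegc : (Polynomial.cyclotomic p ℚ).natDegree = p - 1 := by
      rw [Polynomial.natDegree_cyclotomic, Nat.totient_prime hp]
    have hmul := Polynomial.natDegree_mul hcyc0 hr0
    rw [← hr] at hmul
    have hrdeg : r.natDegree = 0 := by omega
    obtain ⟨r0, rfl⟩ := Polynomial.natDegree_eq_zero.mp hrdeg
    refine ⟨r0, fun j hj => ?_⟩
    rw [← hcoeff j hj, hr, Polynomial.coeff_mul_C]
    haveI : Fact p.Prime := ⟨hp⟩
    rw [Polynomial.cyclotomic_prime, Polynomial.finset_sum_coeff]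
    simp only [Polynomial.coeff_X_pow]
    rw [Finset.sum_ite_eq (Finset.range p) j (fun _ => (1:ℚ))]
    simp [Finset.mem_range.mpr hj]
  obtain ⟨r0, hr0⟩ := key
  intro j hj k hk
  have := (hr0 j hj).trans (hr0 k hk).symm
  exact_mod_cast this

/-- If a sum of `M` powers of a primitive `p`-th root of unity equals the integer `γ`,
then `M = γ + p·d` for some `d ≥ 0` with `-d ≤ γ`. -/
lemma key_count_aux8 {p : ℕ} (hp : p.Prime) {ζ : ℂ} (hζ : IsPrimitiveRoot ζ p)
    (M : ℕ) (γ : ℤ) (b : ℕ → ℕ) (h : ∑ i ∈ Finset.range M, ζ ^ (b i) = (γ : ℂ)) :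
    ∃ d : ℕ, (M : ℤ) = γ + p * d ∧ -(d : ℤ) ≤ γ := by
  have hpos := hp.pos
  have hp2 := hp.two_le
  set m : ℕ → ℕ := fun j => ((Finset.range M).filter (fun i => b i % p = j)).card with hm
  have hmaps : ∀ i ∈ Finset.range M, b i % p ∈ Finset.range p :=
    fun i _ => Finset.mem_range.mpr (Nat.mod_lt _ hpos)
  have hcard : ∑ j ∈ Finset.range p, m j = M := by
    rw [hm]
    exact ((Finset.card_eq_sum_card_fiberwise hmaps).symm).trans (Finset.card_range M)
  have hsum : ∑ j ∈ Finset.range p, (m j : ℂ) * ζ ^ j = (γ : ℂ) := by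
    rw [← h, ← Finset.sum_fiberwise_of_maps_to hmaps (fun i => ζ ^ (b i))]
    apply Finset.sum_congr rfl
    intro j hj
    symm
    calc ∑ i ∈ (Finset.range M).filter (fun i => b i % p = j), ζ ^ (b i)
        = ∑ _i ∈ (Finset.range M).filter (fun i => b i % p = j), ζ ^ j := by
          apply Finset.sum_congr rfl
          intro i hi
          have hbi : b i % p = j := (Finset.mem_filter.mp hi).2
          conv_lhs => rw [← Nat.div_add_mod (b i) p]
          rw [pow_add, pow_mul, hζ.pow_eq_one, one_pow, one_mul, hbi]
      _ = (m j : ℂ) * ζ ^ j := by rw [Finset.sum_const, nsmul_eq_mul]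
  set c : ℕ → ℤ := fun j => (m j : ℤ) - (if j = 0 then γ else 0) with hc
  have hifsum : ∑ j ∈ Finset.range p, ((if j = 0 then γ else 0 : ℤ) : ℂ) * ζ ^ j = (γ : ℂ) := by
    rw [Finset.sum_eq_single_of_mem 0 (Finset.mem_range.mpr hpos)]
    · simp
    · intro j _ hj0
      simp [hj0]
  have hzero : ∑ j ∈ Finset.range p, (c j : ℂ) * ζ ^ j = 0 := by
    have : ∀ j ∈ Finset.range p, (c j : ℂ) * ζ ^ j =
        (m j : ℂ) * ζ ^ j - ((if j = 0 then γ else 0 : ℤ) : ℂ) * ζ ^ j := by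
      intro j _
      rw [hc]
      push_cast
      ring
    rw [Finset.sum_congr rfl this, Finset.sum_sub_distrib, hsum, hifsum, sub_self]
  have hconst := coeffs_const_aux8 hp hζ c hzero
  refine ⟨m (p - 1), ?_, ?_⟩
  · have hM : (M : ℤ) = ∑ j ∈ Finset.range p, (m j : ℤ) := by
      rw [← hcard]; push_cast; ring
    have hcj : ∀ j ∈ Finset.range p, c j = (m (p - 1) : ℤ) := by
      intro j hj
      have h1 := hconst j (Finset.mem_range.mp hj) (p - 1) (by omega)
      rw [h1, hc]
      simp only
      rw [if_neg (by omega)]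
      ring
    have hsplit : ∀ j ∈ Finset.range p, (m j : ℤ) = c j + (if j = 0 then γ else 0) := by
      intro j _
      rw [hc]; ring
    rw [hM, Finset.sum_congr rfl hsplit, Finset.sum_add_distrib,
      Finset.sum_congr rfl hcj, Finset.sum_const, Finset.card_range,
      Finset.sum_ite_eq' (Finset.range p) 0 (fun _ => γ)]
    simp only [Finset.mem_range.mpr hpos, if_true, nsmul_eq_mul]
    ring
  · have h0 := hconst 0 hpos (p - 1) (by omega)
    have : (m 0 : ℤ) - γ = (m (p - 1) : ℤ) - 0 := by
      have := h0
      rw [hc] at this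
      simpa [show p - 1 ≠ 0 by omega] using this
    have hm0 : (0:ℤ) ≤ m 0 := Int.natCast_nonneg _
    omega

end Aux

lemma autocorr_eq_aux8 {p n : ℕ} {ζ : ℂ} (t : ℕ) (ht1 : 1 ≤ t) (ht2 : t ≤ 2) (htn : t ≤ n)
    (a : ℤ → ℂ) (hper : ∀ i : ℤ, a (i + (n + 2 : ℕ)) = a i) (h0 : a 0 = 0) (h1 : a 1 = 0)
    (B : ℕ → ℕ) (hB : ∀ i : ℕ, 2 ≤ i → i ≤ n + 1 → a (i : ℤ) = ζ ^ B i)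
    (hconj : ∀ b : ℕ, (starRingEnd ℂ) (ζ ^ b) = ζ ^ ((p - 1) * b)) :
    autocorr (n + 2) a (t : ℤ) =
      ∑ i ∈ Finset.range (n - t), ζ ^ (B (2 + i) + (p - 1) * B (2 + i + t)) := by
  unfold autocorr
  have step : ∀ j ∈ Finset.range (n + 2), a (j : ℤ) * (starRingEnd ℂ) (a ((j : ℤ) + t)) =
      if j ∈ Finset.Ico 2 (n + 2 - t) then ζ ^ (B j + (p - 1) * B (j + t)) else 0 := by
    intro j hj
    rw [Finset.mem_range] at hj
    by_cases hcase : 2 ≤ j ∧ j < n + 2 - t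
    · rw [if_pos (Finset.mem_Ico.mpr hcase)]
      have hj1 : a (j : ℤ) = ζ ^ B j := hB j hcase.1 (by omega)
      have hj2 : a ((j : ℤ) + t) = ζ ^ B (j + t) := by
        have hcast : (j : ℤ) + t = ((j + t : ℕ) : ℤ) := by push_cast; ring
        rw [hcast]
        exact hB (j + t) (by omega) (by omega)
      rw [hj1, hj2, hconj, ← pow_add]
    · rw [if_neg (fun hmem => hcase (Finset.mem_Ico.mp hmem))]
      by_cases hj2 : j < 2
      · interval_cases j
        · simp only [Nat.cast_zero] at *
          rw [h0, zero_mul]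
        · simp only [Nat.cast_one] at *
          rw [h1, zero_mul]
      · have hge : n + 2 - t ≤ j := by omega
        have hcast : (j : ℤ) + t = ((j + t - (n + 2) : ℕ) : ℤ) + ((n + 2 : ℕ) : ℤ) := by
          push_cast [show n + 2 ≤ j + t by omega]
          ring
        rw [hcast, hper]
        have hor : j + t - (n + 2) = 0 ∨ j + t - (n + 2) = 1 := by omega
        rcases hor with hh | hh <;> rw [hh]
        · simp only [Nat.cast_zero]
          rw [h0, map_zero, mul_zero]
        · simp only [Nat.cast_one]
          rw [h1, map_zero, mul_zero]
  rw [Finset.sum_congr rfl step, Finset.sum_ite_mem]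
  have hinter : Finset.range (n + 2) ∩ Finset.Ico 2 (n + 2 - t) = Finset.Ico 2 (n + 2 - t) := by
    apply Finset.inter_eq_right.mpr
    intro x hx
    rw [Finset.mem_Ico] at hx
    exact Finset.mem_range.mpr (by omega)
  rw [hinter, Finset.sum_Ico_eq_sum_range]
  have : n + 2 - t - 2 = n - t := by omega
  rw [this]

theorem stmt8 (p n : ℕ) (hp : p.Prime) (hn : 2 ≤ n) (γ1 γ2 : ℤ)
    (ζ : ℂ) (hζ : IsPrimitiveRoot ζ p)
    (h : ∃ a : ℤ → ℂ,
      (∀ i : ℤ, a (i + (n + 2 : ℕ)) = a i) ∧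
      a 0 = 0 ∧ a 1 = 0 ∧
      (∀ i : ℕ, 2 ≤ i → i ≤ n + 1 → ∃ b : ℕ, a (i : ℤ) = ζ ^ b) ∧
      autocorr (n + 2) a 1 = (γ1 : ℂ) ∧ autocorr (n + 2) a ((n : ℤ) + 1) = (γ1 : ℂ) ∧
      (∀ t : ℕ, 2 ≤ t → t ≤ n → autocorr (n + 2) a (t : ℤ) = (γ2 : ℂ))) :
    (p : ℤ) ∣ (n : ℤ) - γ2 - 2 ∧ (p : ℤ) ∣ (n : ℤ) - γ1 - 1 ∧
    -(((n : ℤ) - γ2 - 2) / p) ≤ γ2 ∧ γ2 ≤ (n : ℤ) - 2 ∧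
    -(((n : ℤ) - γ1 - 1) / p) ≤ γ1 ∧ γ1 ≤ (n : ℤ) - 1 := by
  classical
  obtain ⟨a, hper, h0, h1, h4, hC1, _, hC⟩ := h
  set B : ℕ → ℕ := fun i => if h' : 2 ≤ i ∧ i ≤ n + 1 then (h4 i h'.1 h'.2).choose else 0
    with hBdef
  have hB : ∀ i : ℕ, 2 ≤ i → i ≤ n + 1 → a (i : ℤ) = ζ ^ B i := by
    intro i hi hi'
    rw [hBdef]
    simp only [dif_pos (⟨hi, hi'⟩ : 2 ≤ i ∧ i ≤ n + 1)]
    exact (h4 i hi hi').choose_spec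
  have hp2 := hp.two_le
  have hζ1 : ζ ^ p = 1 := hζ.pow_eq_one
  have hnorm : ‖ζ‖ = 1 := Complex.norm_eq_one_of_pow_eq_one hζ1 hp.pos.ne'
  have hconj : ∀ b : ℕ, (starRingEnd ℂ) (ζ ^ b) = ζ ^ ((p - 1) * b) := by
    have hinvζ : (starRingEnd ℂ) ζ = ζ ^ (p - 1) := by
      rw [← Complex.inv_eq_conj hnorm]
      symm
      apply eq_inv_of_mul_eq_one_left
      rw [← pow_succ, Nat.sub_add_cancel (by omega : 1 ≤ p)]
      exact hζ1
    intro b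
    rw [map_pow, hinvζ, ← pow_mul]
  have e2 : ∑ i ∈ Finset.range (n - 2), ζ ^ (B (2 + i) + (p - 1) * B (2 + i + 2)) = (γ2 : ℂ) := by
    rw [← autocorr_eq_aux8 2 (by omega) le_rfl hn a hper h0 h1 B hB hconj]
    exact hC 2 le_rfl hn
  obtain ⟨d2, hd2, hd2'⟩ := key_count_aux8 hp hζ (n - 2) γ2 _ e2
  have e1 : ∑ i ∈ Finset.range (n - 1), ζ ^ (B (2 + i) + (p - 1) * B (2 + i + 1)) = (γ1 : ℂ) := by
    rw [← autocorr_eq_aux8 1 le_rfl (by omega) (by omega) a hper h0 h1 B hB hconj]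
    rw [show ((1 : ℕ) : ℤ) = 1 from Nat.cast_one]
    exact hC1
  obtain ⟨d1, hd1, hd1'⟩ := key_count_aux8 hp hζ (n - 1) γ1 _ e1
  have hc2 : ((n - 2 : ℕ) : ℤ) = (n : ℤ) - 2 := by
    push_cast [Nat.cast_sub hn]; ring
  have hc1 : ((n - 1 : ℕ) : ℤ) = (n : ℤ) - 1 := by
    push_cast [Nat.cast_sub (by omega : 1 ≤ n)]; ring
  rw [hc2] at hd2
  rw [hc1] at hd1
  have hpne : (p : ℤ) ≠ 0 := by exact_mod_cast hp.pos.ne'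
  have hg2 : (n : ℤ) - γ2 - 2 = p * d2 := by linarith
  have hg1 : (n : ℤ) - γ1 - 1 = p * d1 := by linarith
  have hpd2 : (0 : ℤ) ≤ (p : ℤ) * d2 := by positivity
  have hpd1 : (0 : ℤ) ≤ (p : ℤ) * d1 := by positivity
  refine ⟨⟨d2, hg2⟩, ⟨d1, hg1⟩, ?_, by linarith, ?_, by linarith⟩
  · rw [hg2, Int.mul_ediv_cancel_left _ hpne]
    exact hd2'
  · rw [hg1, Int.mul_ediv_cancel_left _ hpne]
    exact hd1'
end

section
/- Let p be a prime and n ≥ 2 an integer. If R ⊆ ZMod (n+2) × ZMod p with |R| = n is an (n+2, p, n, λ1, 0, λ3, μ1, μ2)-PDPDS, then (n-1)·(λ1 + (p-1)·μ1) + 2·(λ3 + (p-1)·μ2) = n² - n. -/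
open Finset

theorem stmt9 (p n : ℕ) (hp : p.Prime) (hn : 2 ≤ n)
    (l1 l3 m1 m2 : ℤ)
    (R : Finset (ZMod (n + 2) × ZMod p))
    (hPDPDS : IsPDPDS (n + 2) p n l1 0 l3 m1 m2 R) :
    ((n : ℤ) - 1) * (l1 + ((p : ℤ) - 1) * m1) + 2 * (l3 + ((p : ℤ) - 1) * m2) =
      (n : ℤ) ^ 2 - n := by
  obtain ⟨hcard, h1, h2, h3, h5, h6⟩ := hPDPDS
  haveI : NeZero p := ⟨hp.pos.ne'⟩
  haveI : Fact (1 < n + 2) := ⟨by omega⟩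
  -- total sum of diffCount over all differences
  have key : ∑ d : ZMod (n+2) × ZMod p, diffCount R d = R.card * R.card - R.card := by
    rw [← Finset.offDiag_card]
    rw [Finset.card_eq_sum_card_fiberwise (f := fun x => x.1 - x.2) (t := Finset.univ)
      (fun x _ => Finset.mem_univ _)]
    apply Finset.sum_congr rfl
    intro d _
    rw [diffCount]
    congr 1
    ext x
    simp only [Finset.mem_filter, Finset.mem_offDiag, Finset.mem_product]
    tauto
  have keyZ : ∑ d : ZMod (n+2) × ZMod p, (diffCount R d : ℤ) = (n : ℤ)^2 - n := by
    rw [← Nat.cast_sum, key, hcard, Nat.cast_sub (Nat.le_mul_of_pos_left n (by omega))]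
    push_cast
    ring
  -- diffCount at 0 is 0
  have hzero : (diffCount R ((0 : ZMod (n+2)), (0 : ZMod p)) : ℤ) = 0 := by
    norm_cast
    rw [diffCount, Finset.card_eq_zero, Finset.filter_eq_empty_iff]
    intro x _
    rintro ⟨hne, heq⟩
    apply hne
    have : x.1 - x.2 = 0 := heq
    exact sub_eq_zero.mp this
  -- inner sums over g
  have inner : ∀ (h : ZMod (n+2)) (a b : ℤ), (diffCount R (h, 0) : ℤ) = a →
      (∀ g : ZMod p, g ≠ 0 → (diffCount R (h, g) : ℤ) = b) →
      ∑ g : ZMod p, (diffCount R (h, g) : ℤ) = a + ((p : ℤ) - 1) * b := by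
    intro h a b ha hb
    rw [Fintype.sum_eq_add_sum_compl (0 : ZMod p) (fun g => (diffCount R (h, g) : ℤ)), ha]
    congr 1
    rw [Finset.sum_congr rfl (fun g hg => hb g (by simpa using hg))]
    rw [Finset.sum_const, Finset.card_compl, Finset.card_singleton, ZMod.card]
    rw [nsmul_eq_mul, Nat.cast_sub hp.one_le]
    push_cast
    ring
  -- facts about 0, 1, -1 in ZMod (n+2)
  have h01 : (0 : ZMod (n+2)) ≠ 1 := zero_ne_one
  have hne11 : (1 : ZMod (n+2)) ≠ -1 := by
    intro he
    have h2z : ((2 : ℕ) : ZMod (n+2)) = 0 := by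
      push_cast
      linear_combination he
    rw [ZMod.natCast_eq_zero_iff] at h2z
    have := Nat.le_of_dvd (by norm_num) h2z
    omega
  have h0m1 : (0 : ZMod (n+2)) ≠ -1 := by
    intro he
    exact one_ne_zero (by linear_combination he)
  -- split the outer sum
  set T : Finset (ZMod (n+2)) := {0, 1, -1} with hT
  have hTcard : T.card = 3 := by
    rw [hT, Finset.card_insert_of_notMem (by simp [h01, h0m1]),
      Finset.card_insert_of_notMem (by simp [hne11]), Finset.card_singleton]
  have hsplit : ∑ d : ZMod (n+2) × ZMod p, (diffCount R d : ℤ) =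
      ∑ h ∈ T, ∑ g : ZMod p, (diffCount R (h, g) : ℤ) +
      ∑ h ∈ Tᶜ, ∑ g : ZMod p, (diffCount R (h, g) : ℤ) := by
    rw [Fintype.sum_prod_type, ← Finset.sum_add_sum_compl T]
  -- sum over T
  have hF0 : ∑ g : ZMod p, (diffCount R ((0 : ZMod (n+2)), g) : ℤ) = 0 := by
    rw [inner 0 0 0 hzero (fun g hg => h2 g hg)]; ring
  have hF1 : ∀ h : ZMod (n+2), h = 1 ∨ h = -1 →
      ∑ g : ZMod p, (diffCount R (h, g) : ℤ) = l3 + ((p : ℤ) - 1) * m2 := by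
    intro h hh
    exact inner h l3 m2 (h3 h hh) (fun g hg => h6 h g hh hg)
  have hsumT : ∑ h ∈ T, ∑ g : ZMod p, (diffCount R (h, g) : ℤ) =
      2 * (l3 + ((p : ℤ) - 1) * m2) := by
    rw [hT, Finset.sum_insert (by simp [h01, h0m1]),
      Finset.sum_insert (by simp [hne11]), Finset.sum_singleton,
      hF0, hF1 1 (Or.inl rfl), hF1 (-1) (Or.inr rfl)]
    ring
  -- sum over Tᶜ
  have hsumTc : ∑ h ∈ Tᶜ, ∑ g : ZMod p, (diffCount R (h, g) : ℤ) =
      ((n : ℤ) - 1) * (l1 + ((p : ℤ) - 1) * m1) := by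
    have hmem : ∀ h ∈ Tᶜ, ∑ g : ZMod p, (diffCount R (h, g) : ℤ) =
        l1 + ((p : ℤ) - 1) * m1 := by
      intro h hh
      simp only [hT, Finset.mem_compl, Finset.mem_insert, Finset.mem_singleton, not_or] at hh
      exact inner h l1 m1 (h1 h hh.1 hh.2.1 hh.2.2) (fun g hg => h5 h g hh.1 hh.2.1 hh.2.2 hg)
    rw [Finset.sum_congr rfl hmem, Finset.sum_const, Finset.card_compl, hTcard, ZMod.card]
    rw [show n + 2 - 3 = n - 1 from rfl, nsmul_eq_mul, Nat.cast_sub (show 1 ≤ n by omega)]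
    push_cast
    ring
  rw [hsplit, hsumT, hsumTc] at keyZ
  linarith
end

section
/- Let p be a prime, n ≥ 2 an integer, and γ1, γ2 integers with p dividing n - γ2 - 2 and n - γ1 - 1. Let R ⊆ ZMod (n+2) × ZMod p be an (n+2, p, n, (n-γ2-2)/p + γ2, 0, (n-γ1-1)/p + γ1, (n-γ2-2)/p, (n-γ1-1)/p)-PDPDS, and for i = 0, 1, …, p-1 let s_i be the number of elements of R whose second component equals i. Then ∑_{j=0}^{p-1} s_j² = ((n-γ2-2)/p + γ2)·(n-1) + 2·((n-γ1-1)/p + γ1) + n, and for each i = 1, 2, …, ⌈(p-1)/2⌉, ∑_{j=0}^{p-1} s_j·s_{j-i} = ((n-γ2-2)/p)·(n-1) + 2·((n-γ1-1)/p), where the subscripts are computed modulo p. -/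
open Finset

lemma diagCard {α : Type*} [DecidableEq α] (R : Finset α) :
    ((R ×ˢ R).filter (fun x => x.1 = x.2)).card = R.card := by
  have h : (R ×ˢ R).filter (fun x => x.1 = x.2) = R.image (fun r => (r, r)) := by
    ext x
    simp only [mem_filter, mem_product, mem_image]
    constructor
    · rintro ⟨⟨h1, _⟩, he⟩
      exact ⟨x.1, h1, Prod.ext_iff.mpr ⟨rfl, he⟩⟩
    · rintro ⟨a, ha, rfl⟩
      exact ⟨⟨ha, ha⟩, rfl⟩
  rw [h, card_image_of_injective _ (fun a b hab => congrArg Prod.fst hab)]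

lemma key_count {N p : ℕ} [NeZero N] [NeZero p] (R : Finset (ZMod N × ZMod p)) (s : ZMod p → ℕ)
    (hs : ∀ c : ZMod p, s c = (R.filter (fun x => x.2 = c)).card) (g : ZMod p) :
    ∑ j : ZMod p, s j * s (j - g) =
      (∑ h : ZMod N, diffCount R (h, g)) + (if g = 0 then R.card else 0) := by
  classical
  have h1 : ∑ j : ZMod p, s j * s (j - g)
      = ((R ×ˢ R).filter (fun x => x.1.2 - x.2.2 = g)).card := by
    rw [Finset.card_eq_sum_card_fiberwise (f := fun x => x.1.2) (t := univ)
      (fun x _ => mem_univ _)]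
    refine Finset.sum_congr rfl fun j _ => ?_
    rw [Finset.filter_filter]
    have he : (R ×ˢ R).filter (fun x => x.1.2 - x.2.2 = g ∧ x.1.2 = j)
        = (R.filter (fun r => r.2 = j)) ×ˢ (R.filter (fun r => r.2 = j - g)) := by
      ext x
      simp only [mem_filter, mem_product]
      constructor
      · rintro ⟨⟨ha, hb⟩, hg, hj⟩
        refine ⟨⟨ha, hj⟩, hb, ?_⟩
        rw [← hg, ← hj]; ring
      · rintro ⟨⟨ha, hj⟩, hb, hg⟩
        exact ⟨⟨ha, hb⟩, by rw [hj, hg]; ring, hj⟩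
    rw [he, Finset.card_product, hs, hs]
  have h3 : ((R ×ˢ R).filter (fun x => x.1 ≠ x.2 ∧ x.1.2 - x.2.2 = g)).card
      = ∑ h : ZMod N, diffCount R (h, g) := by
    rw [Finset.card_eq_sum_card_fiberwise (f := fun x => x.1.1 - x.2.1) (t := univ)
      (fun x _ => mem_univ _)]
    refine Finset.sum_congr rfl fun h _ => ?_
    rw [Finset.filter_filter]
    unfold diffCount
    congr 1
    apply Finset.filter_congr
    intro x _
    simp only [Prod.ext_iff, Prod.fst_sub, Prod.snd_sub]
    tauto
  have h2 : ((R ×ˢ R).filter (fun x => x.1.2 - x.2.2 = g)).card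
      = ((R ×ˢ R).filter (fun x => x.1 ≠ x.2 ∧ x.1.2 - x.2.2 = g)).card
        + (if g = 0 then R.card else 0) := by
    by_cases hg : g = 0
    · subst hg
      simp only [if_pos rfl]
      rw [← Finset.card_filter_add_card_filter_not
        (p := fun x : (ZMod N × ZMod p) × (ZMod N × ZMod p) => x.1 = x.2)
        (s := (R ×ˢ R).filter (fun x => x.1.2 - x.2.2 = 0)), Nat.add_comm]
      congr 1
      · rw [Finset.filter_filter]
        congr 1
        apply Finset.filter_congr
        intro x _
        tauto
      · rw [Finset.filter_filter, ← diagCard R, if_pos trivial]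
        congr 1
        apply Finset.filter_congr
        intro x _
        constructor
        · rintro ⟨_, he⟩; exact he
        · intro he; exact ⟨by rw [he]; ring, he⟩
    · simp only [if_neg hg, Nat.add_zero]
      congr 1
      apply Finset.filter_congr
      intro x _
      constructor
      · intro hgx
        refine ⟨fun he => hg ?_, hgx⟩
        rw [he] at hgx; rw [← hgx]; ring
      · rintro ⟨_, hgx⟩; exact hgx
  rw [h1, h2, h3]

lemma eval_sum {N : ℕ} (hN : 4 ≤ N) [NeZero N] (F : ZMod N → ℤ) (a b c d : ℤ)
    (h0 : F 0 = a) (h1 : F 1 = b) (hm1 : F (-1) = c)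
    (hrest : ∀ h, h ≠ 0 → h ≠ 1 → h ≠ -1 → F h = d) :
    ∑ h : ZMod N, F h = a + b + c + ((N : ℤ) - 3) * d := by
  have hdvd : ∀ k : ℕ, 0 < k → k < 4 → ((k : ZMod N) ≠ 0) := by
    intro k hk1 hk2 hk
    rw [ZMod.natCast_eq_zero_iff] at hk
    have := Nat.le_of_dvd hk1 hk
    omega
  have h01 : (0 : ZMod N) ≠ 1 := by
    intro h; exact hdvd 1 one_pos (by norm_num) (by push_cast; rw [← h])
  have h0m1 : (0 : ZMod N) ≠ -1 := by
    intro h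
    apply hdvd 1 one_pos (by norm_num)
    have : (-1 : ZMod N) = 0 := h.symm
    push_cast
    linear_combination -this
  have h1m1 : (1 : ZMod N) ≠ -1 := by
    intro h
    apply hdvd 2 two_pos (by norm_num)
    push_cast
    linear_combination h
  set T : Finset (ZMod N) := {0, 1, -1} with hT
  have hTcard : T.card = 3 := by
    rw [hT, card_insert_of_notMem (by simp [h01, h0m1]),
      card_insert_of_notMem (by simp [h1m1]), card_singleton]
  have hsplit : ∑ h : ZMod N, F h = ∑ h ∈ T, F h + ∑ h ∈ Tᶜ, F h :=
    (Finset.sum_add_sum_compl T F).symm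
  have hTsum : ∑ h ∈ T, F h = a + b + c := by
    rw [hT, Finset.sum_insert (by simp [h01, h0m1]),
      Finset.sum_insert (by simp [h1m1]), Finset.sum_singleton, h0, h1, hm1]
    ring
  have hTc : ∑ h ∈ Tᶜ, F h = ((N : ℤ) - 3) * d := by
    rw [Finset.sum_congr rfl (fun h hh => ?_), Finset.sum_const, Finset.card_compl,
      hTcard, ZMod.card, nsmul_eq_mul]
    · congr 1
      have : 3 ≤ N := by omega
      push_cast [Nat.cast_sub this]
      ring
    · rw [Finset.mem_compl, hT] at hh
      simp only [mem_insert, mem_singleton, not_or] at hh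
      exact hrest h hh.1 hh.2.1 hh.2.2
  rw [hsplit, hTsum, hTc]

lemma sum_range_zmod {p : ℕ} [NeZero p] {M : Type*} [AddCommMonoid M] (f : ZMod p → M) :
    ∑ j ∈ Finset.range p, f (j : ZMod p) = ∑ j : ZMod p, f j := by
  apply Finset.sum_nbij' (i := fun j => ((j : ℕ) : ZMod p)) (j := fun c => c.val)
  · intro a _; exact mem_univ _
  · intro c _; exact mem_range.mpr (ZMod.val_lt c)
  · intro a ha; exact ZMod.val_cast_of_lt (mem_range.mp ha)
  · intro c _; exact ZMod.natCast_rightInverse c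
  · intro a _; rfl

/-- Note: in ℕ, `⌈(p-1)/2⌉ = p / 2` for `p ≥ 1`. -/
theorem stmt10 (p n : ℕ) (hp : p.Prime) (hn : 2 ≤ n) (γ1 γ2 : ℤ)
    (hdvd2 : (p : ℤ) ∣ (n : ℤ) - γ2 - 2) (hdvd1 : (p : ℤ) ∣ (n : ℤ) - γ1 - 1)
    (R : Finset (ZMod (n + 2) × ZMod p))
    (hPDPDS : IsPDPDS (n + 2) p n
      (((n : ℤ) - γ2 - 2) / p + γ2) 0 (((n : ℤ) - γ1 - 1) / p + γ1)
      (((n : ℤ) - γ2 - 2) / p) (((n : ℤ) - γ1 - 1) / p) R)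
    (s : ZMod p → ℕ)
    (hs : ∀ c : ZMod p, s c = (R.filter (fun x => x.2 = c)).card) :
    (∑ j ∈ Finset.range p, (s (j : ZMod p) : ℤ) ^ 2 =
      (((n : ℤ) - γ2 - 2) / p + γ2) * ((n : ℤ) - 1) +
        2 * (((n : ℤ) - γ1 - 1) / p + γ1) + n) ∧
    (∀ i : ℕ, 1 ≤ i → i ≤ p / 2 →
      ∑ j ∈ Finset.range p, (s (j : ZMod p) : ℤ) * (s ((j : ZMod p) - (i : ZMod p)) : ℤ) =
        (((n : ℤ) - γ2 - 2) / p) * ((n : ℤ) - 1) + 2 * (((n : ℤ) - γ1 - 1) / p)) := by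
  haveI : NeZero p := ⟨hp.pos.ne'⟩
  haveI : NeZero (n + 2) := ⟨by omega⟩
  obtain ⟨hcard, hl1, hl2, hl3, hm1, hm2⟩ := hPDPDS
  have hN4 : (4 : ℕ) ≤ n + 2 := by omega
  have key : ∀ g : ZMod p, (∑ j : ZMod p, (s j : ℤ) * (s (j - g) : ℤ)) =
      (∑ h : ZMod (n + 2), (diffCount R (h, g) : ℤ)) + (if g = 0 then (n : ℤ) else 0) := by
    intro g
    have hk := key_count R s hs g
    calc (∑ j : ZMod p, (s j : ℤ) * (s (j - g) : ℤ))
        = ((∑ j : ZMod p, s j * s (j - g) : ℕ) : ℤ) := by push_cast; rfl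
      _ = _ := by rw [hk, hcard]; push_cast; rfl
  constructor
  · have h0 : (diffCount R ((0 : ZMod (n + 2)), (0 : ZMod p)) : ℤ) = 0 := by
      unfold diffCount
      norm_cast
      rw [Finset.card_eq_zero, Finset.filter_eq_empty_iff]
      intro x _ hx
      obtain ⟨hne, he⟩ := hx
      exact hne (sub_eq_zero.mp (by rw [he]; rfl))
    have hk := key 0
    rw [if_pos rfl, eval_sum hN4 (fun h => (diffCount R (h, 0) : ℤ)) _ _ _ _
      h0 (hl3 1 (Or.inl rfl)) (hl3 (-1) (Or.inr rfl)) hl1] at hk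
    rw [sum_range_zmod (fun j => (s j : ℤ) ^ 2)]
    have : ∑ j : ZMod p, (s j : ℤ) ^ 2 = ∑ j : ZMod p, (s j : ℤ) * (s (j - 0) : ℤ) := by
      refine Finset.sum_congr rfl fun j _ => ?_
      rw [sub_zero, sq]
    rw [this, hk]
    push_cast
    ring
  · intro i hi1 hi2
    have hip : i < p := lt_of_le_of_lt hi2 (Nat.div_lt_self hp.pos one_lt_two)
    have hg : ((i : ℕ) : ZMod p) ≠ 0 := by
      rw [Ne, ZMod.natCast_eq_zero_iff]
      intro hdvd
      have := Nat.le_of_dvd (by omega) hdvd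
      omega
    have hk := key (i : ZMod p)
    rw [if_neg hg, eval_sum hN4 (fun h => (diffCount R (h, (i : ZMod p)) : ℤ)) _ _ _ _
      (hl2 _ hg) (hm2 1 _ (Or.inl rfl) hg) (hm2 (-1) _ (Or.inr rfl) hg)
      (fun h h1 h2 h3 => hm1 h _ h1 h2 h3 hg), add_zero] at hk
    rw [sum_range_zmod (fun j => (s j : ℤ) * (s (j - (i : ZMod p)) : ℤ)), hk]
    push_cast
    ring
end

section
/- Let p be an odd prime, n ≥ 2 an integer, and γ1, γ2 integers with γ2 ≤ -3. Then there does not exist an almost p-ary nearly perfect sequence of type (γ1, γ2) and period n+2 with two consecutive zero-symbols. -/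
open Finset

theorem stmt13 (p n : ℕ) (hp : p.Prime) (hodd : Odd p) (hn : 2 ≤ n)
    (ζ : ℂ) (hζ : IsPrimitiveRoot ζ p)
    (γ1 γ2 : ℤ) (hγ2 : γ2 ≤ -3) :
    ¬ ∃ a : ℤ → ℂ,
      (∀ i : ℤ, a (i + (n + 2 : ℕ)) = a i) ∧
      a 0 = 0 ∧ a 1 = 0 ∧
      (∀ i : ℕ, 2 ≤ i → i ≤ n + 1 → ∃ b : ℕ, a (i : ℤ) = ζ ^ b) ∧
      autocorr (n + 2) a 1 = (γ1 : ℂ) ∧ autocorr (n + 2) a ((n : ℤ) + 1) = (γ1 : ℂ) ∧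
      (∀ t : ℕ, 2 ≤ t → t ≤ n → autocorr (n + 2) a (t : ℤ) = (γ2 : ℂ)) := by
  obtain ⟨m, rfl⟩ : ∃ m, n = m + 2 := ⟨n - 2, by omega⟩
  rintro ⟨a, hper, h0, h1, hval, hc1, hcn1, hcmid⟩
  have e24 : m + 2 + 2 = m + 4 := by omega
  rw [e24] at hc1 hcn1 hcmid
  -- norm of ζ is 1
  have hζnorm : ‖ζ‖ = 1 :=
    Complex.norm_eq_one_of_pow_eq_one hζ.pow_eq_one hp.ne_zero
  have hanorm : ∀ i : ℕ, 2 ≤ i → i ≤ m + 3 → ‖a (i : ℤ)‖ = 1 := by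
    intro i h2 h3
    obtain ⟨b, hb⟩ := hval i h2 (by omega)
    rw [hb, norm_pow, hζnorm, one_pow]
  -- periodicity restated
  have hper' : ∀ i : ℤ, a (i + (m + 4 : ℤ)) = a i := by
    intro i
    have := hper i
    push_cast at this
    convert this using 2 <;> try ring
  -- shift invariance of full-period sum
  set S : ℂ := ∑ i ∈ Finset.range (m + 4), a (i : ℤ) with hS
  have hshift : ∀ i : ℕ, ∑ t ∈ Finset.range (m + 4), a ((i : ℤ) + t) = S := by
    intro i
    induction i with
    | zero => simp [hS]
    | succ k ih =>
      calc ∑ t ∈ Finset.range (m + 4), a (((k : ℕ) + 1 : ℕ) + t : ℤ)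
          = ∑ t ∈ Finset.range (m + 4), a ((k : ℤ) + ((t + 1 : ℕ) : ℤ)) := by
            apply Finset.sum_congr rfl; intro t _; push_cast; ring_nf
        _ = (∑ t ∈ Finset.range (m + 4 + 1), a ((k : ℤ) + t)) - a ((k : ℤ) + (0 : ℕ)) := by
            rw [Finset.sum_range_succ' (fun t : ℕ => a ((k : ℤ) + t))]
            push_cast
            ring
        _ = S := by
            rw [Finset.sum_range_succ]
            have : a ((k : ℤ) + ((m + 4 : ℕ) : ℤ)) = a (k : ℤ) := by
              have := hper' (k : ℤ); push_cast at this ⊢; convert this using 2 <;> try ring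
            rw [this, ih]
            push_cast
            ring
  -- master identity
  have hmaster : ∑ t ∈ Finset.range (m + 4), autocorr (m + 4) a (t : ℤ)
      = S * (starRingEnd ℂ) S := by
    unfold autocorr
    rw [Finset.sum_comm]
    rw [Finset.sum_mul]
    apply Finset.sum_congr rfl
    intro i _
    rw [← Finset.mul_sum, ← map_sum, hshift i]
  -- value of autocorrelation at 0
  have hmul1 : ∀ i : ℕ, 2 ≤ i → i ≤ m + 3 →
      a (i : ℤ) * (starRingEnd ℂ) (a (i : ℤ)) = 1 := by
    intro i h2 h3
    rw [Complex.mul_conj, Complex.normSq_eq_norm_sq, hanorm i h2 h3]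
    norm_num
  have hC0 : autocorr (m + 4) a 0 = ((m + 2 : ℕ) : ℂ) := by
    unfold autocorr
    simp only [add_zero]
    rw [Finset.sum_range_succ' (fun i : ℕ => a (i : ℤ) * (starRingEnd ℂ) (a (i : ℤ)))]
    rw [Finset.sum_range_succ' (fun i : ℕ => a ((i + 1 : ℕ) : ℤ) * (starRingEnd ℂ) (a ((i + 1 : ℕ) : ℤ)))]
    have hz0 : a ((0 : ℕ) : ℤ) = 0 := by exact_mod_cast h0
    have hz1 : a ((0 + 1 : ℕ) : ℤ) = 0 := by exact_mod_cast h1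
    rw [hz0, hz1]
    have : ∀ i ∈ Finset.range (m + 2),
        a ((i + 1 + 1 : ℕ) : ℤ) * (starRingEnd ℂ) (a ((i + 1 + 1 : ℕ) : ℤ)) = 1 := by
      intro i hi
      simp only [Finset.mem_range] at hi
      have := hmul1 (i + 2) (by omega) (by omega)
      convert this using 3 <;> push_cast <;> ring
    rw [Finset.sum_congr rfl this, Finset.sum_const]
    simp
  -- decompose the sum over t
  have hsum_t : ∑ t ∈ Finset.range (m + 4), autocorr (m + 4) a (t : ℤ)
      = ((m + 2 : ℕ) : ℂ) + (γ1 : ℂ) + (γ1 : ℂ) + ((m + 1 : ℕ) : ℂ) * (γ2 : ℂ) := by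
    rw [Finset.sum_range_succ]
    rw [Finset.sum_range_succ' (fun t : ℕ => autocorr (m + 4) a (t : ℤ))]
    rw [Finset.sum_range_succ' (fun t : ℕ => autocorr (m + 4) a ((t + 1 : ℕ) : ℤ))]
    have hF0 : autocorr (m + 4) a ((0 : ℕ) : ℤ) = ((m + 2 : ℕ) : ℂ) := by
      exact_mod_cast hC0
    have hF1 : autocorr (m + 4) a ((0 + 1 : ℕ) : ℤ) = (γ1 : ℂ) := by
      have : ((0 + 1 : ℕ) : ℤ) = 1 := by norm_num
      rw [this]; exact hc1
    have hFlast : autocorr (m + 4) a ((m + 3 : ℕ) : ℤ) = (γ1 : ℂ) := by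
      have : ((m + 3 : ℕ) : ℤ) = ((m + 2 : ℕ) : ℤ) + 1 := by push_cast; ring
      rw [this]; exact hcn1
    have hmid : ∀ t ∈ Finset.range (m + 1),
        autocorr (m + 4) a ((t + 1 + 1 : ℕ) : ℤ) = (γ2 : ℂ) := by
      intro t ht
      simp only [Finset.mem_range] at ht
      have := hcmid (t + 2) (by omega) (by omega)
      convert this using 3 <;> push_cast <;> ring
    rw [Finset.sum_congr rfl hmid, Finset.sum_const, hF0, hF1, hFlast]
    simp only [Finset.card_range, nsmul_eq_mul]
    push_cast
    ring
  -- γ1 as a sum of unit-modulus terms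
  have hγ1sum : (γ1 : ℂ) = ∑ k ∈ Finset.range (m + 1),
      a ((k + 2 : ℕ) : ℤ) * (starRingEnd ℂ) (a ((k + 3 : ℕ) : ℤ)) := by
    rw [← hc1]
    unfold autocorr
    rw [Finset.sum_range_succ]
    have hlast : a (((m + 3 : ℕ) : ℤ) + 1) = 0 := by
      have he : ((m + 3 : ℕ) : ℤ) + 1 = (0 : ℤ) + (m + 4 : ℤ) := by push_cast; ring
      rw [he, hper' 0, h0]
    rw [hlast]
    rw [Finset.sum_range_succ' (fun i : ℕ => a (i : ℤ) * (starRingEnd ℂ) (a ((i : ℤ) + 1)))]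
    rw [Finset.sum_range_succ' (fun i : ℕ => a ((i + 1 : ℕ) : ℤ) * (starRingEnd ℂ) (a (((i + 1 : ℕ) : ℤ) + 1)))]
    have hz0 : a ((0 : ℕ) : ℤ) = 0 := by exact_mod_cast h0
    have hz1 : a ((0 + 1 : ℕ) : ℤ) = 0 := by exact_mod_cast h1
    rw [hz0, hz1]
    simp only [zero_mul, mul_zero, map_zero, add_zero]
    apply Finset.sum_congr rfl
    intro k _
    congr 2 <;> push_cast <;> ring
  -- norms of the γ1 terms
  have hterm_norm : ∀ k ∈ Finset.range (m + 1),
      ‖a ((k + 2 : ℕ) : ℤ) * (starRingEnd ℂ) (a ((k + 3 : ℕ) : ℤ))‖ = 1 := by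
    intro k hk
    simp only [Finset.mem_range] at hk
    rw [norm_mul, Complex.norm_conj, hanorm (k + 2) (by omega) (by omega),
      hanorm (k + 3) (by omega) (by omega)]
    norm_num
  -- the integer K
  set K : ℤ := (m + 2 : ℤ) + 2 * γ1 + (m + 1) * γ2 with hKdef
  have hK : (K : ℂ) = S * (starRingEnd ℂ) S := by
    rw [← hmaster, hsum_t, hKdef]
    push_cast
    ring
  have hKr : (K : ℝ) = Complex.normSq S := by
    rw [Complex.mul_conj] at hK
    exact_mod_cast hK
  have hK0 : 0 ≤ K := by
    have : (0 : ℝ) ≤ (K : ℝ) := hKr ▸ Complex.normSq_nonneg S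
    exact_mod_cast this
  have hprod : (m + 1 : ℤ) * γ2 ≤ (m + 1) * (-3) := by
    apply mul_le_mul_of_nonneg_left hγ2
    positivity
  have hγ1ge : (m : ℤ) + 1 ≤ γ1 := by
    have h2 : 2 * (m : ℤ) + 1 ≤ 2 * γ1 := by
      rw [hKdef] at hK0
      linarith
    omega
  -- real parts
  have hre : ((γ1 : ℝ)) = ∑ k ∈ Finset.range (m + 1),
      (a ((k + 2 : ℕ) : ℤ) * (starRingEnd ℂ) (a ((k + 3 : ℕ) : ℤ))).re := by
    have := congrArg Complex.re hγ1sum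
    simpa [Complex.re_sum] using this
  have hre_le : ∀ k ∈ Finset.range (m + 1),
      (a ((k + 2 : ℕ) : ℤ) * (starRingEnd ℂ) (a ((k + 3 : ℕ) : ℤ))).re ≤ (fun _ : ℕ => (1 : ℝ)) k := by
    intro k hk
    calc (a ((k + 2 : ℕ) : ℤ) * (starRingEnd ℂ) (a ((k + 3 : ℕ) : ℤ))).re
        ≤ ‖a ((k + 2 : ℕ) : ℤ) * (starRingEnd ℂ) (a ((k + 3 : ℕ) : ℤ))‖ :=
          Complex.re_le_norm _
      _ = 1 := hterm_norm k hk
  have hsum_ones : ∑ k ∈ Finset.range (m + 1), (fun _ : ℕ => (1 : ℝ)) k = (m + 1 : ℝ) := by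
    simp
  have hγ1le : γ1 ≤ (m : ℤ) + 1 := by
    have : (γ1 : ℝ) ≤ (m + 1 : ℝ) := by
      rw [hre]
      calc _ ≤ ∑ k ∈ Finset.range (m + 1), (fun _ : ℕ => (1 : ℝ)) k :=
            Finset.sum_le_sum hre_le
        _ = (m + 1 : ℝ) := hsum_ones
    exact_mod_cast this
  have hγ1eq : γ1 = (m : ℤ) + 1 := le_antisymm hγ1le hγ1ge
  -- equality case: every term equals 1
  have hsum_eq : ∑ k ∈ Finset.range (m + 1),
      (a ((k + 2 : ℕ) : ℤ) * (starRingEnd ℂ) (a ((k + 3 : ℕ) : ℤ))).re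
      = ∑ k ∈ Finset.range (m + 1), (fun _ : ℕ => (1 : ℝ)) k := by
    rw [← hre, hsum_ones, hγ1eq]
    push_cast
    ring
  have hall : ∀ k ∈ Finset.range (m + 1),
      (a ((k + 2 : ℕ) : ℤ) * (starRingEnd ℂ) (a ((k + 3 : ℕ) : ℤ))).re = 1 :=
    (Finset.sum_eq_sum_iff_of_le hre_le).1 hsum_eq
  have hone : ∀ k ∈ Finset.range (m + 1),
      a ((k + 2 : ℕ) : ℤ) * (starRingEnd ℂ) (a ((k + 3 : ℕ) : ℤ)) = 1 := by
    intro k hk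
    set z := a ((k + 2 : ℕ) : ℤ) * (starRingEnd ℂ) (a ((k + 3 : ℕ) : ℤ)) with hzdef
    have h1 : z.re = 1 := hall k hk
    have h2 : Complex.normSq z = 1 := by
      rw [Complex.normSq_eq_norm_sq, hterm_norm k hk]; norm_num
    have h3 : z.im = 0 := by
      have := Complex.normSq_apply z
      nlinarith [this, h1, h2]
    apply Complex.ext <;> simp [h1, h3]
  -- all nonzero symbols are equal
  have hstep : ∀ k : ℕ, k ≤ m → a ((k + 3 : ℕ) : ℤ) = a ((k + 2 : ℕ) : ℤ) := by
    intro k hk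
    have hz := hone k (Finset.mem_range.mpr (by omega))
    have hns : (starRingEnd ℂ) (a ((k + 3 : ℕ) : ℤ)) * a ((k + 3 : ℕ) : ℤ) = 1 := by
      rw [mul_comm, Complex.mul_conj, Complex.normSq_eq_norm_sq, hanorm (k + 3) (by omega) (by omega)]
      norm_num
    have : a ((k + 2 : ℕ) : ℤ) = a ((k + 3 : ℕ) : ℤ) := by
      calc a ((k + 2 : ℕ) : ℤ)
          = a ((k + 2 : ℕ) : ℤ) * ((starRingEnd ℂ) (a ((k + 3 : ℕ) : ℤ)) * a ((k + 3 : ℕ) : ℤ)) := by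
            rw [hns, mul_one]
        _ = (a ((k + 2 : ℕ) : ℤ) * (starRingEnd ℂ) (a ((k + 3 : ℕ) : ℤ))) * a ((k + 3 : ℕ) : ℤ) := by
            ring
        _ = a ((k + 3 : ℕ) : ℤ) := by rw [hz, one_mul]
    exact this.symm
  have hconst : ∀ k : ℕ, k ≤ m + 1 → a ((k + 2 : ℕ) : ℤ) = a 2 := by
    intro k
    induction k with
    | zero => intro _; norm_num
    | succ j ih =>
      intro hj
      have h3 : a ((j + 3 : ℕ) : ℤ) = a ((j + 2 : ℕ) : ℤ) := hstep j (by omega)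
      have he : ((j + 1 + 2 : ℕ) : ℤ) = ((j + 3 : ℕ) : ℤ) := by push_cast; ring
      rw [he, h3, ih (by omega)]
  -- compute S
  have hSval : S = ((m + 2 : ℕ) : ℂ) * a 2 := by
    rw [hS]
    rw [Finset.sum_range_succ' (fun i : ℕ => a (i : ℤ))]
    rw [Finset.sum_range_succ' (fun i : ℕ => a ((i + 1 : ℕ) : ℤ))]
    have hz0 : a ((0 : ℕ) : ℤ) = 0 := by exact_mod_cast h0
    have hz1 : a ((0 + 1 : ℕ) : ℤ) = 0 := by exact_mod_cast h1
    rw [hz0, hz1]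
    have : ∀ i ∈ Finset.range (m + 2), a ((i + 1 + 1 : ℕ) : ℤ) = a 2 := by
      intro i hi
      simp only [Finset.mem_range] at hi
      have := hconst i (by omega)
      have he : ((i + 1 + 1 : ℕ) : ℤ) = ((i + 2 : ℕ) : ℤ) := by push_cast; ring
      rw [he, this]
    rw [Finset.sum_congr rfl this, Finset.sum_const]
    simp only [Finset.card_range, nsmul_eq_mul]
    push_cast
    ring
  -- final contradiction
  have ha2 : Complex.normSq (a 2) = 1 := by
    have h := hanorm 2 le_rfl (by omega)
    have h2 : ‖a 2‖ = 1 := by exact_mod_cast h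
    rw [Complex.normSq_eq_norm_sq, h2]
    norm_num
  have hnsS : Complex.normSq S = ((m : ℝ) + 2) ^ 2 := by
    rw [hSval, Complex.normSq_mul, ha2, mul_one]
    rw [Complex.normSq_natCast]
    push_cast
    ring
  have hKval : K = ((m : ℤ) + 2) ^ 2 := by
    have : (K : ℝ) = ((m : ℝ) + 2) ^ 2 := by rw [hKr, hnsS]
    exact_mod_cast this
  have hKle : K ≤ 1 := by
    rw [hKdef, hγ1eq]
    linarith
  have hm0 : (0 : ℤ) ≤ (m : ℤ) := Int.natCast_nonneg m
  nlinarith [hKval, hKle, hm0]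
end
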